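/- arXiv:1505.00250 — 5 statements merged into one kernel-verified Lean document; each statement's English description precedes it below -/
import Mathlib

section
/- Fix an integer t ≥ 1. For all integers n ≥ 1, p(n,t) equals the number of points x ∈ ℤ^{t+1} such that t divides x_t, x lies in the union ⋃_{m≥1} C_m, and ∑_{i=0}^{t} x_i = n. -/
/-- The generator `v_i ∈ ℝ^{t+1}`: coordinates `0,…,(i-1) mod t` equal `1`, the remaining
coordinates among `0,…,t-1` equal `0`, and the last coordinate equals `((i-1) div t)·t`. -/
noncomputable def geneV (t : ℕ) (i : ℕ) : Fin (t + 1) → ℝ := fun l =>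
  if (l : ℕ) = t then (((i - 1) / t) * t : ℕ)
  else if (l : ℕ) ≤ (i - 1) % t then 1 else 0

/-- The half-open simplicial cone `C_m`, generated by `v_m, …, v_{m+t}` with the facet
opposite the first generator open. -/
noncomputable def coneC (t : ℕ) (m : ℕ) : Set (Fin (t + 1) → ℝ) :=
  { x | ∃ α : Fin (t + 1) → ℝ, 0 < α 0 ∧ (∀ i, 0 ≤ α i) ∧
      x = ∑ i : Fin (t + 1), α i • geneV t (m + (i : ℕ)) }

/-- The normal vector `u_l = -((l div t)+1)·t·e₀ + t·e_{l mod t} + e_t`. -/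
noncomputable def normalU (t : ℕ) (l : ℕ) : Fin (t + 1) → ℝ := fun j =>
  (if (j : ℕ) = 0 then -(((l / t + 1) * t : ℕ) : ℝ) else 0)
    + (if (j : ℕ) = l % t then (t : ℝ) else 0)
    + (if (j : ℕ) = t then 1 else 0)

/-- Standard inner product on `ℝ^{t+1}`. -/
noncomputable def sprod {n : ℕ} (u x : Fin n → ℝ) : ℝ := ∑ j, u j * x j

/-- `p n t` is the number of (non-empty) partitions of `n` whose difference between
largest and smallest part is at most `t`. -/
noncomputable def boundedDiffCount (n t : ℕ) : ℕ :=
  Nat.card { P : n.Partition // P.parts ≠ 0 ∧ ∀ a ∈ P.parts, ∀ b ∈ P.parts, a ≤ b + t }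

set_option linter.unusedSectionVars false
set_option linter.unusedVariables false


def geneVZ (t : ℕ) (i : ℕ) : Fin (t + 1) → ℤ := fun l =>
  if (l : ℕ) = t then (((i - 1) / t) * t : ℕ)
  else if (l : ℕ) ≤ (i - 1) % t then 1 else 0

lemma geneV_eq_cast (t i : ℕ) (l : Fin (t+1)) : geneV t i l = ((geneVZ t i l : ℤ) : ℝ) := by
  unfold geneV geneVZ; split_ifs <;> norm_cast


lemma div_mod_lin (t a i : ℕ) (ht : 0 < t) (hi : i ≤ t) :
    (a + i) % t = (if a % t + i < t then a % t + i else a % t + i - t) ∧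
    (a + i) / t = (if a % t + i < t then a / t else a / t + 1) := by
  have hd := Nat.div_add_mod a t
  have hr : a % t < t := Nat.mod_lt _ ht
  set q := a / t with hq
  set r := a % t with hrdef
  by_cases h : r + i < t
  · have h1 : a + i = t * q + (r + i) := by omega
    rw [h1, Nat.mul_add_mod, Nat.mul_add_div ht, Nat.mod_eq_of_lt h, Nat.div_eq_of_lt h]
    simp [h]
  · have hexp : t * (q + 1) = t * q + t := by ring
    have h1 : a + i = t * (q + 1) + (r + i - t) := by omega
    have h2 : r + i - t < t := by omega
    rw [h1, Nat.mul_add_mod, Nat.mul_add_div ht, Nat.mod_eq_of_lt h2, Nat.div_eq_of_lt h2]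
    simp [h]

lemma res_eq (t m i j : ℕ) (ht : 1 ≤ t) (hm : 1 ≤ m) (hi : i ≤ t) (hj : j ≤ t) :
    (m + i - 1) % t = (m + j - 1) % t ↔ (i = j ∨ (i = 0 ∧ j = t) ∨ (i = t ∧ j = 0)) := by
  have e1 : m + i - 1 = (m-1) + i := by omega
  have e2 : m + j - 1 = (m-1) + j := by omega
  have hr : (m-1) % t < t := Nat.mod_lt _ (by omega)
  have h1 := (div_mod_lin t (m-1) i (by omega) hi).1
  have h2 := (div_mod_lin t (m-1) j (by omega) hj).1
  rw [e1, e2, h1, h2]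
  split_ifs <;> omega

noncomputable def Xext (t : ℕ) (x : Fin (t+1) → ℝ) : ℕ → ℝ :=
  fun l => if h : l < t then x ⟨l, Nat.lt_succ_of_lt h⟩ else 0

section coneanalysis

set_option linter.unusedSectionVars false

variable {t m : ℕ} {x α : Fin (t+1) → ℝ}
  (ht : 1 ≤ t) (hm : 1 ≤ m)
  (hx : x = ∑ i : Fin (t + 1), α i • geneV t (m + (i : ℕ)))

include ht hm hx

lemma coords (l : ℕ) :
    Xext t x l = ∑ i : Fin (t+1), α i * (if l ≤ (m + (i:ℕ) - 1) % t then 1 else 0) := by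
  unfold Xext
  by_cases h : l < t
  · rw [dif_pos h, hx, Finset.sum_apply]
    apply Finset.sum_congr rfl
    intro i _
    have hne : ((⟨l, Nat.lt_succ_of_lt h⟩ : Fin (t+1)) : ℕ) = l := rfl
    simp only [Pi.smul_apply, smul_eq_mul, geneV, hne]
    rw [if_neg (by omega)]
  · rw [dif_neg h]
    symm
    apply Finset.sum_eq_zero
    intro i _
    have : (m + (i:ℕ) - 1) % t < t := Nat.mod_lt _ (by omega)
    rw [if_neg (by omega), mul_zero]

lemma coord_last :
    x (Fin.last t) = ∑ i : Fin (t+1), α i * (((m + (i:ℕ) - 1) / t * t : ℕ) : ℝ) := by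
  rw [hx, Finset.sum_apply]
  apply Finset.sum_congr rfl
  intro i _
  have hl : ((Fin.last t : Fin (t+1)) : ℕ) = t := rfl
  simp only [Pi.smul_apply, smul_eq_mul, geneV, hl, if_true, eq_self_iff_true]

lemma coord_diff (l : ℕ) :
    Xext t x l - Xext t x (l+1)
      = ∑ i : Fin (t+1), α i * (if (m + (i:ℕ) - 1) % t = l then 1 else 0) := by
  rw [coords ht hm hx l, coords ht hm hx (l+1), ← Finset.sum_sub_distrib]
  apply Finset.sum_congr rfl
  intro i _
  split_ifs <;> first | ring1 | (exfalso; omega)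



lemma point_last (i : ℕ) (hi : i ≤ t) :
    (((m + i - 1)/t : ℕ) : ℝ) - (((m-1)/t + 1 : ℕ) : ℝ)
      + (if (m-1)%t ≤ (m+i-1)%t then (1:ℝ) else 0)
    = if i = t then 1 else 0 := by
  have e1 : m + i - 1 = (m-1) + i := by omega
  have hr : (m-1)%t < t := Nat.mod_lt _ (by omega)
  obtain ⟨hmod, hdiv⟩ := div_mod_lin t (m-1) i (by omega) hi
  rw [e1, hmod, hdiv]
  split_ifs <;> push_cast <;> first | ring1 | (exfalso; omega)

omit hm hx in
lemma sum_delta (c : Fin (t+1) → ℝ) (k : Fin (t+1))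
    (hc : ∀ i, c i = if i = k then 1 else 0) : ∑ i, α i * c i = α k := by
  simp only [hc, mul_ite, mul_one, mul_zero]
  simp [Finset.sum_ite_eq']

lemma alpha_mid (j : Fin (t+1)) (hj0 : (j:ℕ) ≠ 0) (hjt : (j:ℕ) ≠ t) :
    α j = Xext t x ((m + (j:ℕ) - 1) % t) - Xext t x ((m + (j:ℕ) - 1) % t + 1) := by
  rw [coord_diff ht hm hx]
  symm
  apply sum_delta ht
  intro i
  have hi := i.isLt
  have hj := j.isLt
  have hres := res_eq t m (i:ℕ) (j:ℕ) ht hm (by omega) (by omega)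
  by_cases hij : i = j
  · rw [if_pos (by rw [hij]), if_pos hij]
  · rw [if_neg hij, if_neg]
    rw [hres]
    rintro (h | ⟨h1, h2⟩ | ⟨h1, h2⟩)
    · exact hij (Fin.ext h)
    · exact hjt h2
    · exact hj0 h2

lemma alpha_last :
    α (Fin.last t)
      = x (Fin.last t) / t - (((m-1)/t + 1 : ℕ) : ℝ) * Xext t x 0 + Xext t x ((m-1)%t) := by
  have h0 : Xext t x 0 = ∑ i : Fin (t+1), α i * 1 := by
    rw [coords ht hm hx 0]
    exact Finset.sum_congr rfl (fun i _ => by rw [if_pos (Nat.zero_le _)])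
  have hrr : Xext t x ((m-1)%t)
      = ∑ i : Fin (t+1), α i * (if (m-1)%t ≤ (m + (i:ℕ)-1)%t then (1:ℝ) else 0) :=
    coords ht hm hx _
  have hl : x (Fin.last t) / t = ∑ i : Fin (t+1), α i * (((m + (i:ℕ) - 1)/t : ℕ) : ℝ) := by
    rw [coord_last ht hm hx, Finset.sum_div]
    apply Finset.sum_congr rfl
    intro i _
    have htne : (t:ℝ) ≠ 0 := Nat.cast_ne_zero.mpr (by omega)
    push_cast
    field_simp
  rw [h0, hrr, hl, Finset.mul_sum, ← Finset.sum_sub_distrib, ← Finset.sum_add_distrib]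
  symm
  have : ∀ i : Fin (t+1),
      α i * (((m + (i:ℕ) - 1)/t : ℕ) : ℝ) - (((m-1)/t + 1 : ℕ) : ℝ) * (α i * 1)
        + α i * (if (m-1)%t ≤ (m + (i:ℕ)-1)%t then (1:ℝ) else 0)
      = α i * ((((m + (i:ℕ) - 1)/t : ℕ) : ℝ) - (((m-1)/t + 1 : ℕ) : ℝ)
        + (if (m-1)%t ≤ (m + (i:ℕ)-1)%t then (1:ℝ) else 0)) := by
    intro i; ring
  rw [Finset.sum_congr rfl (fun i _ => this i)]
  apply sum_delta ht _ (Fin.last t)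
  intro i
  have hi := i.isLt
  rw [point_last ht hm hx (i:ℕ) (by omega)]
  by_cases h : i = Fin.last t
  · rw [if_pos (by rw [h]; rfl), if_pos h]
  · rw [if_neg, if_neg h]
    intro hcon
    exact h (Fin.ext (by simpa using hcon))

lemma alpha_zero_last :
    α 0 + α (Fin.last t) = Xext t x ((m-1)%t) - Xext t x ((m-1)%t + 1) := by
  have e0 : (m + ((0 : Fin (t+1)):ℕ) - 1) % t = (m-1)%t := by norm_num
  rw [← e0, coord_diff ht hm hx]
  have hsplit : ∀ i : Fin (t+1),
      (if (m + (i:ℕ) - 1) % t = (m + ((0 : Fin (t+1)):ℕ) - 1) % t then (1:ℝ) else 0)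
      = (if i = 0 then 1 else 0) + (if i = Fin.last t then 1 else 0) := by
    intro i
    have hi := i.isLt
    have hres := res_eq t m (i:ℕ) ((0 : Fin (t+1)):ℕ) ht hm (by omega) (by omega)
    simp only [hres]
    have h0t : ((0 : Fin (t+1)):ℕ) = 0 := rfl
    by_cases hc : (i:ℕ) = 0
    · rw [if_pos (by left; omega), if_pos (Fin.ext hc), if_neg, add_zero]
      intro hcon; rw [hcon] at hc; simp [Fin.last] at hc; omega
    · by_cases hct : (i:ℕ) = t
      · rw [if_pos, if_neg (fun hcon => by rw [hcon] at hc; simp at hc), if_pos (Fin.ext hct),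
          zero_add]
        right; right; exact ⟨hct, h0t⟩
      · rw [if_neg, if_neg (fun hcon => hc (by rw [hcon]; rfl)),
          if_neg (fun hcon => hct (by rw [hcon]; rfl)), add_zero]
        rintro (h | ⟨h1, h2⟩ | ⟨h1, h2⟩)
        · exact hc (by omega)
        · omega
        · exact hct h1
  symm
  calc ∑ i : Fin (t+1), α i * (if (m + (i:ℕ) - 1) % t = (m + ((0 : Fin (t+1)):ℕ) - 1) % t then (1:ℝ) else 0)
      = ∑ i : Fin (t+1), (α i * (if i = 0 then (1:ℝ) else 0)
          + α i * (if i = Fin.last t then (1:ℝ) else 0)) := by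
        apply Finset.sum_congr rfl
        intro i _
        rw [hsplit i]
        ring
    _ = α 0 + α (Fin.last t) := by
        rw [Finset.sum_add_distrib, sum_delta ht _ 0 (fun _ => rfl),
          sum_delta ht _ (Fin.last t) (fun _ => rfl)]

lemma diff_nonneg (hα : ∀ i, 0 ≤ α i) (l : ℕ) : 0 ≤ Xext t x l - Xext t x (l+1) := by
  rw [coord_diff ht hm hx l]
  apply Finset.sum_nonneg
  intro i _
  apply mul_nonneg (hα i)
  split_ifs <;> norm_num

end coneanalysis

noncomputable def Afun (t : ℕ) (x : Fin (t+1) → ℝ) (k : ℕ) : ℝ :=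
  x (Fin.last t) / t - ((k/t + 1 : ℕ) : ℝ) * Xext t x 0 + Xext t x (k % t)

lemma Afun_step (t : ℕ) (x : Fin (t+1) → ℝ) (ht : 1 ≤ t) (k : ℕ) :
    Afun t x (k+1) = Afun t x k - (Xext t x (k%t) - Xext t x (k%t + 1)) := by
  obtain ⟨hmod, hdiv⟩ := div_mod_lin t k 1 (by omega) ht
  unfold Afun
  rw [hmod, hdiv]
  by_cases h : k%t + 1 < t
  · rw [if_pos h, if_pos h]; ring
  · rw [if_neg h, if_neg h]
    have hkk : k%t < t := Nat.mod_lt _ (by omega)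
    have h1 : k%t + 1 - t = 0 := by omega
    have h2 : k%t + 1 = t := by omega
    have hX : Xext t x (k%t + 1) = 0 := by
      unfold Xext; rw [dif_neg (by omega)]
    rw [h1, hX]
    have hX0 : Xext t x 0 = Xext t x 0 := rfl
    push_cast
    ring

lemma Afun_antitone (t : ℕ) (x : Fin (t+1) → ℝ) (ht : 1 ≤ t)
    (hdiffs : ∀ l, 0 ≤ Xext t x l - Xext t x (l+1)) : Antitone (Afun t x) :=
  antitone_nat_of_succ_le (fun k => by rw [Afun_step t x ht k]; linarith [hdiffs (k%t)])

lemma cone_vals {t m : ℕ} {x : Fin (t+1) → ℝ} (ht : 1 ≤ t) (hm : 1 ≤ m)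
    (h : x ∈ coneC t m) : 0 ≤ Afun t x (m-1) ∧ Afun t x m < 0 := by
  obtain ⟨α, hα0, hα, hx⟩ := h
  have hlast := alpha_last ht hm hx
  have hzl := alpha_zero_last ht hm hx
  have h1 : Afun t x (m-1) = α (Fin.last t) := by
    unfold Afun; rw [hlast]
  have hstep := Afun_step t x ht (m-1)
  have hm1 : m - 1 + 1 = m := by omega
  rw [hm1] at hstep
  constructor
  · rw [h1]; exact hα (Fin.last t)
  · rw [hstep, h1, ← hzl]
    have := hα (Fin.last t)
    linarith

lemma cone_m_unique {t m m' : ℕ} {x : Fin (t+1) → ℝ} (ht : 1 ≤ t) (hm : 1 ≤ m) (hm' : 1 ≤ m')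
    (h1 : x ∈ coneC t m) (h2 : x ∈ coneC t m') : m = m' := by
  have hdiffs : ∀ l, 0 ≤ Xext t x l - Xext t x (l+1) := by
    obtain ⟨α, hα0, hα, hx⟩ := h1
    exact diff_nonneg ht hm hx hα
  have hA := Afun_antitone t x ht hdiffs
  obtain ⟨c1a, c1b⟩ := cone_vals ht hm h1
  obtain ⟨c2a, c2b⟩ := cone_vals ht hm' h2
  by_contra hne
  rcases Nat.lt_or_ge m m' with h | h
  · have : Afun t x (m'-1) ≤ Afun t x m := hA (by omega)
    linarith
  · have hlt : m' < m := by omega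
    have : Afun t x (m-1) ≤ Afun t x m' := hA (by omega)
    linarith

lemma sum_ind_le (t s : ℕ) (hs : s < t) :
    ∑ l : Fin t, (if (l : ℕ) ≤ s then (1:ℤ) else 0) = (s : ℤ) + 1 := by
  rw [Fin.sum_univ_eq_sum_range (fun l => if l ≤ s then (1:ℤ) else 0) t]
  rw [Finset.sum_ite, Finset.sum_const, Finset.sum_const]
  have : (Finset.range t).filter (fun l => l ≤ s) = Finset.range (s+1) := by
    ext l; simp only [Finset.mem_filter, Finset.mem_range]; omega
  rw [this]
  simp

lemma geneVZ_sum (t i : ℕ) (ht : 0 < t) (hi : 1 ≤ i) :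
    ∑ l : Fin (t+1), geneVZ t i l = (i : ℤ) := by
  rw [Fin.sum_univ_castSucc]
  have hlast : geneVZ t i (Fin.last t) = (((i-1)/t*t : ℕ) : ℤ) := by simp [geneVZ]
  rw [hlast]
  have hs : (i-1) % t < t := Nat.mod_lt _ ht
  have h1 : ∀ l : Fin t, geneVZ t i (Fin.castSucc l) = if (l : ℕ) ≤ (i-1)%t then 1 else 0 := by
    intro l
    have hne : ((Fin.castSucc l : Fin (t+1)) : ℕ) ≠ t := by
      have := l.isLt; simp [Fin.castSucc]; omega
    simp only [geneVZ, if_neg hne]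
    rfl
  simp only [h1]
  rw [sum_ind_le t _ hs]
  have key : ((i-1)%t + 1) + (i-1)/t*t = i := by
    have hd := Nat.div_add_mod (i-1) t
    have hcom : (i-1)/t*t = t*((i-1)/t) := mul_comm _ _
    omega
  exact_mod_cast key

def XextZ (t : ℕ) (x : Fin (t+1) → ℤ) : ℕ → ℤ :=
  fun l => if h : l < t then x ⟨l, Nat.lt_succ_of_lt h⟩ else 0

lemma XextZ_cast (t : ℕ) (x : Fin (t+1) → ℤ) (l : ℕ) :
    ((XextZ t x l : ℤ) : ℝ) = Xext t (fun j => (x j : ℝ)) l := by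
  unfold XextZ Xext
  split_ifs <;> simp

lemma cone_lattice {t m : ℕ} (ht : 1 ≤ t) (hm : 1 ≤ m) (x : Fin (t+1) → ℤ)
    (hdvd : (t:ℤ) ∣ x (Fin.last t))
    (hcone : (fun j => (x j : ℝ)) ∈ coneC t m) :
    ∃ c : Fin (t+1) → ℕ, 0 < c 0 ∧
      x = ∑ i : Fin (t+1), (c i : ℤ) • geneVZ t (m + (i:ℕ)) := by
  obtain ⟨α, hα0, hα, hx⟩ := hcone
  obtain ⟨k, hk⟩ := hdvd
  set xr : Fin (t+1) → ℝ := fun j => (x j : ℝ) with hxr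
  have htR : (t : ℝ) ≠ 0 := Nat.cast_ne_zero.mpr (by omega)
  have hXc : ∀ l, ((XextZ t x l : ℤ) : ℝ) = Xext t xr l := by
    intro l; rw [hxr]; exact XextZ_cast t x l
  have hxlast : xr (Fin.last t) = ((x (Fin.last t) : ℤ) : ℝ) := rfl
  have hkR : (k : ℝ) = xr (Fin.last t) / t := by
    rw [hxlast, hk]
    push_cast
    field_simp
  set AZ : ℤ := k - (((m-1)/t + 1 : ℕ) : ℤ) * XextZ t x 0 + XextZ t x ((m-1)%t) with hAZ
  have hAZcast : ((AZ : ℤ) : ℝ)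
      = xr (Fin.last t) / t - (((m-1)/t + 1 : ℕ) : ℝ) * Xext t xr 0 + Xext t xr ((m-1)%t) := by
    rw [hAZ]
    simp only [Int.cast_add, Int.cast_sub, Int.cast_mul, Int.cast_natCast, hXc, hkR]
  have hlast := alpha_last ht hm hx
  have hzl := alpha_zero_last ht hm hx
  set cZ : Fin (t+1) → ℤ := fun j =>
    if (j:ℕ) = 0 then
      (XextZ t x ((m-1)%t) - XextZ t x ((m-1)%t + 1)) - AZ
    else if (j:ℕ) = t then AZ
    else XextZ t x ((m + (j:ℕ) - 1)%t) - XextZ t x ((m + (j:ℕ) - 1)%t + 1) with hcZ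
  have hca : ∀ j : Fin (t+1), ((cZ j : ℤ) : ℝ) = α j := by
    intro j
    simp only [hcZ]
    by_cases h0 : (j:ℕ) = 0
    · have hj0 : j = 0 := Fin.ext h0
      rw [if_pos h0, Int.cast_sub, Int.cast_sub, hXc, hXc, hAZcast, hj0]
      linarith
    · by_cases hT : (j:ℕ) = t
      · have hjT : j = Fin.last t := Fin.ext hT
        rw [if_neg h0, if_pos hT, hAZcast, hjT, ← hlast]
      · rw [if_neg h0, if_neg hT, Int.cast_sub, hXc, hXc, ← alpha_mid ht hm hx j h0 hT]
  have hcZnn : ∀ j, 0 ≤ cZ j := by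
    intro j
    have : (0:ℝ) ≤ ((cZ j : ℤ) : ℝ) := by rw [hca j]; exact hα j
    exact_mod_cast this
  have hcZ0 : 0 < cZ 0 := by
    have : (0:ℝ) < ((cZ 0 : ℤ) : ℝ) := by rw [hca 0]; exact hα0
    exact_mod_cast this
  refine ⟨fun j => (cZ j).toNat, by show 0 < (cZ 0).toNat; omega, ?_⟩
  funext l
  have hcast : ∀ j, ((((cZ j).toNat : ℕ) : ℤ) : ℝ) = α j := by
    intro j
    rw [Int.toNat_of_nonneg (hcZnn j)]
    exact hca j
  apply @Int.cast_injective ℝ _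
  have hxl : ((x l : ℤ) : ℝ) = xr l := rfl
  rw [hxl, hx, Finset.sum_apply, Finset.sum_apply, Int.cast_sum]
  apply Finset.sum_congr rfl
  intro i _
  rw [Pi.smul_apply, Pi.smul_apply, smul_eq_mul, smul_eq_mul, Int.cast_mul, hcast i,
    geneV_eq_cast]

lemma alpha_unique {t m : ℕ} {x α β : Fin (t+1) → ℝ} (ht : 1 ≤ t) (hm : 1 ≤ m)
    (hxα : x = ∑ i : Fin (t+1), α i • geneV t (m + (i:ℕ)))
    (hxβ : x = ∑ i : Fin (t+1), β i • geneV t (m + (i:ℕ))) : α = β := by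
  have hlastα := alpha_last ht hm hxα
  have hlastβ := alpha_last ht hm hxβ
  have hzlα := alpha_zero_last ht hm hxα
  have hzlβ := alpha_zero_last ht hm hxβ
  funext j
  by_cases h0 : (j:ℕ) = 0
  · have hj : j = 0 := Fin.ext h0
    rw [hj]
    linarith
  · by_cases hT : (j:ℕ) = t
    · have hjT : j = Fin.last t := Fin.ext hT
      rw [hjT, hlastα, hlastβ]
    · rw [alpha_mid ht hm hxα j h0 hT, alpha_mid ht hm hxβ j h0 hT]

lemma xsum_eq {t m : ℕ} (ht : 1 ≤ t) (hm : 1 ≤ m) (c : Fin (t+1) → ℕ) :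
    ∑ l : Fin (t+1), (∑ i : Fin (t+1), (c i : ℤ) • geneVZ t (m + (i:ℕ))) l
      = ∑ i : Fin (t+1), (c i : ℤ) * (m + (i:ℕ)) := by
  have hap : ∀ l : Fin (t+1), (∑ i : Fin (t+1), (c i:ℤ) • geneVZ t (m+(i:ℕ))) l
      = ∑ i : Fin (t+1), (c i:ℤ) * geneVZ t (m+(i:ℕ)) l := by
    intro l
    rw [Finset.sum_apply]
    rfl
  simp only [hap]
  rw [Finset.sum_comm]
  apply Finset.sum_congr rfl
  intro i _
  rw [← Finset.mul_sum, geneVZ_sum t (m+(i:ℕ)) (by omega) (by omega)]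
  push_cast
  ring

lemma xdvd {t m : ℕ} (ht : 1 ≤ t) (hm : 1 ≤ m) (c : Fin (t+1) → ℕ) :
    (t:ℤ) ∣ (∑ i : Fin (t+1), (c i : ℤ) • geneVZ t (m + (i:ℕ))) (Fin.last t) := by
  rw [Finset.sum_apply]
  apply Finset.dvd_sum
  intro i _
  have hg : geneVZ t (m+(i:ℕ)) (Fin.last t) = (((m+(i:ℕ)-1)/t*t : ℕ) : ℤ) := by simp [geneVZ]
  rw [Pi.smul_apply, smul_eq_mul, hg]
  apply Dvd.dvd.mul_left
  push_cast
  exact dvd_mul_left _ _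

lemma xcone {t m : ℕ} (ht : 1 ≤ t) (hm : 1 ≤ m) (c : Fin (t+1) → ℕ) (hc0 : 0 < c 0) :
    (fun j => ((∑ i : Fin (t+1), (c i : ℤ) • geneVZ t (m + (i:ℕ))) j : ℝ)) ∈ coneC t m := by
  refine ⟨fun i => (c i : ℝ), by show (0:ℝ) < (c 0 : ℝ); exact_mod_cast hc0, fun i => by positivity, ?_⟩
  funext l
  show ((∑ i : Fin (t+1), (c i : ℤ) • geneVZ t (m + (i:ℕ))) l : ℝ) = _
  rw [Finset.sum_apply, Finset.sum_apply, Int.cast_sum]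
  apply Finset.sum_congr rfl
  intro i _
  rw [Pi.smul_apply, Pi.smul_apply, smul_eq_mul, smul_eq_mul, geneV_eq_cast]
  push_cast
  ring

lemma multiset_decomp {t m : ℕ} (S : Multiset ℕ) (hbd : ∀ a ∈ S, m ≤ a ∧ a ≤ m + t) :
    S = ∑ j : Fin (t+1), Multiset.replicate (S.count (m + (j:ℕ))) (m + (j:ℕ)) := by
  ext s
  rw [Multiset.count_sum']
  simp only [Multiset.count_replicate]
  by_cases hin : m ≤ s ∧ s ≤ m + t
  · have hsm : s - m < t + 1 := by omega
    set j0 : Fin (t+1) := ⟨s - m, hsm⟩ with hj0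
    have hterm : ∀ j : Fin (t+1), (if m + (j:ℕ) = s then S.count (m + (j:ℕ)) else 0)
        = if j = j0 then S.count s else 0 := by
      intro j
      by_cases h : j = j0
      · subst h
        rw [if_pos, if_pos rfl]
        · congr 1
          show m + (s - m) = s
          omega
        · show m + (s - m) = s
          omega
      · rw [if_neg h, if_neg]
        intro hcon
        exact h (Fin.ext (by rw [hj0]; show (j:ℕ) = s - m; omega))
    simp only [hterm]
    rw [Finset.sum_ite_eq' Finset.univ j0]
    simp
  · have hcount : S.count s = 0 := by
      rw [Multiset.count_eq_zero]
      intro hs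
      exact hin (hbd s hs)
    rw [hcount]
    symm
    apply Finset.sum_eq_zero
    intro j _
    rw [if_neg]
    intro hcon
    have := j.isLt
    exact hin ⟨by omega, by omega⟩

lemma count_decomp {t m : ℕ} (c : Fin (t+1) → ℕ) (j : Fin (t+1)) :
    (∑ j' : Fin (t+1), Multiset.replicate (c j') (m + (j':ℕ))).count (m + (j:ℕ)) = c j := by
  rw [Multiset.count_sum']
  simp only [Multiset.count_replicate]
  have hterm : ∀ j' : Fin (t+1), (if m + (j':ℕ) = m + (j:ℕ) then c j' else 0)
      = if j' = j then c j' else 0 := by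
    intro j'
    by_cases h : j' = j
    · subst h; rw [if_pos rfl, if_pos rfl]
    · rw [if_neg h, if_neg]
      intro hcon
      exact h (Fin.ext (by omega))
  simp only [hterm]
  rw [Finset.sum_ite_eq' Finset.univ j]
  simp

lemma repl_sum (t m : ℕ) (c : Fin (t+1) → ℕ) :
    (∑ j : Fin (t+1), Multiset.replicate (c j) (m + (j:ℕ))).sum
      = ∑ j : Fin (t+1), c j * (m + (j:ℕ)) := by
  rw [Multiset.sum_sum]
  apply Finset.sum_congr rfl
  intro j _
  rw [Multiset.sum_replicate, smul_eq_mul]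

lemma xcast (t m : ℕ) (c : Fin (t+1) → ℕ) :
    (fun j => ((∑ i : Fin (t+1), (c i : ℤ) • geneVZ t (m + (i:ℕ))) j : ℝ))
      = ∑ i : Fin (t+1), ((c i : ℝ)) • geneV t (m + (i:ℕ)) := by
  funext l
  show ((∑ i : Fin (t+1), (c i : ℤ) • geneVZ t (m + (i:ℕ))) l : ℝ) = _
  rw [Finset.sum_apply, Finset.sum_apply, Int.cast_sum]
  apply Finset.sum_congr rfl
  intro i _
  rw [Pi.smul_apply, Pi.smul_apply, smul_eq_mul, smul_eq_mul, geneV_eq_cast]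
  push_cast
  ring

noncomputable def partM {t n : ℕ}
    (P : {P : n.Partition // P.parts ≠ 0 ∧ ∀ a ∈ P.parts, ∀ b ∈ P.parts, a ≤ b + t}) : ℕ :=
  P.1.parts.toFinset.min' (Multiset.toFinset_nonempty.mpr P.2.1)

noncomputable def partC {t n : ℕ}
    (P : {P : n.Partition // P.parts ≠ 0 ∧ ∀ a ∈ P.parts, ∀ b ∈ P.parts, a ≤ b + t}) :
    Fin (t+1) → ℕ := fun i => P.1.parts.count (partM P + (i:ℕ))

noncomputable def toLattice {t n : ℕ}
    (P : {P : n.Partition // P.parts ≠ 0 ∧ ∀ a ∈ P.parts, ∀ b ∈ P.parts, a ≤ b + t}) :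
    Fin (t+1) → ℤ :=
  ∑ i : Fin (t+1), (partC P i : ℤ) • geneVZ t (partM P + (i:ℕ))

section assembly

variable {t n : ℕ}

lemma partM_mem (P : {P : n.Partition // P.parts ≠ 0 ∧ ∀ a ∈ P.parts, ∀ b ∈ P.parts, a ≤ b + t}) :
    partM P ∈ P.1.parts :=
  Multiset.mem_toFinset.mp (P.1.parts.toFinset.min'_mem _)

lemma partM_le (P : {P : n.Partition // P.parts ≠ 0 ∧ ∀ a ∈ P.parts, ∀ b ∈ P.parts, a ≤ b + t})
    {b : ℕ} (hb : b ∈ P.1.parts) : partM P ≤ b :=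
  Finset.min'_le _ _ (Multiset.mem_toFinset.mpr hb)

lemma partM_pos (P : {P : n.Partition // P.parts ≠ 0 ∧ ∀ a ∈ P.parts, ∀ b ∈ P.parts, a ≤ b + t}) :
    1 ≤ partM P := P.1.parts_pos (partM_mem P)

lemma partC0_pos (P : {P : n.Partition // P.parts ≠ 0 ∧ ∀ a ∈ P.parts, ∀ b ∈ P.parts, a ≤ b + t}) :
    0 < partC P 0 := by
  have h0 : partM P + ((0 : Fin (t+1)):ℕ) = partM P := by simp
  show 0 < P.1.parts.count (partM P + ((0 : Fin (t+1)):ℕ))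
  rw [h0]
  exact Multiset.count_pos.mpr (partM_mem P)

lemma parts_bd (P : {P : n.Partition // P.parts ≠ 0 ∧ ∀ a ∈ P.parts, ∀ b ∈ P.parts, a ≤ b + t}) :
    ∀ a ∈ P.1.parts, partM P ≤ a ∧ a ≤ partM P + t :=
  fun a ha => ⟨partM_le P ha, P.2.2 a ha (partM P) (partM_mem P)⟩

lemma parts_decomp (P : {P : n.Partition // P.parts ≠ 0 ∧ ∀ a ∈ P.parts, ∀ b ∈ P.parts, a ≤ b + t}) :
    P.1.parts = ∑ j : Fin (t+1), Multiset.replicate (partC P j) (partM P + (j:ℕ)) :=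
  multiset_decomp _ (parts_bd P)

lemma toLattice_dvd (ht : 1 ≤ t)
    (P : {P : n.Partition // P.parts ≠ 0 ∧ ∀ a ∈ P.parts, ∀ b ∈ P.parts, a ≤ b + t}) :
    (t:ℤ) ∣ toLattice P (Fin.last t) :=
  xdvd ht (partM_pos P) _

lemma toLattice_cone (ht : 1 ≤ t)
    (P : {P : n.Partition // P.parts ≠ 0 ∧ ∀ a ∈ P.parts, ∀ b ∈ P.parts, a ≤ b + t}) :
    (fun j => (toLattice P j : ℝ)) ∈ coneC t (partM P) :=
  xcone ht (partM_pos P) _ (partC0_pos P)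

lemma toLattice_sum (ht : 1 ≤ t)
    (P : {P : n.Partition // P.parts ≠ 0 ∧ ∀ a ∈ P.parts, ∀ b ∈ P.parts, a ≤ b + t}) :
    ∑ i, toLattice P i = (n:ℤ) := by
  unfold toLattice
  rw [xsum_eq ht (partM_pos P)]
  have h1 : P.1.parts.sum = n := P.1.parts_sum
  rw [parts_decomp P, repl_sum] at h1
  exact_mod_cast h1

lemma toLattice_inj (ht : 1 ≤ t) :
    Function.Injective
      (toLattice : {P : n.Partition // P.parts ≠ 0 ∧ ∀ a ∈ P.parts, ∀ b ∈ P.parts, a ≤ b + t}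
        → Fin (t+1) → ℤ) := by
  intro P Q h
  have hm : partM P = partM Q := by
    apply cone_m_unique ht (partM_pos P) (partM_pos Q) (toLattice_cone ht P)
    rw [show (fun j => ((toLattice P j : ℤ) : ℝ)) = (fun j => ((toLattice Q j : ℤ) : ℝ)) by rw [h]]
    exact toLattice_cone ht Q
  have hP : (fun j => ((toLattice P j : ℤ) : ℝ))
      = ∑ i : Fin (t+1), ((partC P i : ℝ)) • geneV t (partM P + (i:ℕ)) := xcast t _ _
  have hQ : (fun j => ((toLattice P j : ℤ) : ℝ))
      = ∑ i : Fin (t+1), ((partC Q i : ℝ)) • geneV t (partM P + (i:ℕ)) := by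
    rw [show (fun j => ((toLattice P j : ℤ) : ℝ)) = (fun j => ((toLattice Q j : ℤ) : ℝ)) by rw [h],
      hm]
    exact xcast t _ _
  have hαβ := alpha_unique ht (partM_pos P) hP hQ
  have hc : partC P = partC Q := by
    funext i
    have := congrFun hαβ i
    exact_mod_cast this
  apply Subtype.ext
  apply Nat.Partition.ext
  rw [parts_decomp P, parts_decomp Q, hm, hc]

end assembly


/-- `p(n,t)` equals the number of lattice points `x ∈ ℤ^{t+1}` with `t ∣ x_t` lying in
`⋃_{m≥1} C_m` at height `n`. -/
theorem bounded_diff_count_eq_lattice_point_count (t : ℕ) (ht : 1 ≤ t) (n : ℕ) (hn : 1 ≤ n) :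
    boundedDiffCount n t
      = Nat.card { x : Fin (t + 1) → ℤ //
          (t : ℤ) ∣ x (Fin.last t) ∧
          (∃ m : ℕ, 1 ≤ m ∧ (fun j => (x j : ℝ)) ∈ coneC t m) ∧
          ∑ i, x i = (n : ℤ) } := by
  apply Nat.card_congr
  refine Equiv.ofBijective
    (fun P => ⟨toLattice P, toLattice_dvd ht P,
      ⟨partM P, partM_pos P, toLattice_cone ht P⟩, toLattice_sum ht P⟩) ⟨?_, ?_⟩
  · intro P Q h
    exact toLattice_inj ht (congrArg Subtype.val h)
  · rintro ⟨x, hdvd, ⟨m, hm, hcone⟩, hsum⟩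
    obtain ⟨c, hc0, hxeq⟩ := cone_lattice ht hm x hdvd hcone
    have hsum2 : (∑ j : Fin (t+1), c j * (m + (j:ℕ)) : ℕ) = n := by
      have hxs := xsum_eq ht hm c
      rw [← hxeq] at hxs
      rw [hsum] at hxs
      exact_mod_cast hxs.symm
    have hmemS : ∀ a ∈ ∑ j : Fin (t+1), Multiset.replicate (c j) (m + (j:ℕ)),
        m ≤ a ∧ a ≤ m + t := by
      intro a ha
      rw [Multiset.mem_sum] at ha
      obtain ⟨j, _, haj⟩ := ha
      have hval := Multiset.eq_of_mem_replicate haj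
      have hj := j.isLt
      omega
    have hSsum : (∑ j : Fin (t+1), Multiset.replicate (c j) (m + (j:ℕ))).sum = n := by
      rw [repl_sum]; exact hsum2
    have hmS : m ∈ ∑ j : Fin (t+1), Multiset.replicate (c j) (m + (j:ℕ)) := by
      have hcnt := count_decomp (t := t) (m := m) c 0
      have h00 : m + ((0 : Fin (t+1)):ℕ) = m := by simp
      rw [h00] at hcnt
      exact Multiset.count_pos.mp (by rw [hcnt]; exact hc0)
    have hpos : ∀ {i : ℕ}, i ∈ (∑ j : Fin (t+1), Multiset.replicate (c j) (m + (j:ℕ))) → 0 < i := by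
      intro i hi
      have := hmemS i hi
      omega
    set P0 : n.Partition := ⟨∑ j : Fin (t+1), Multiset.replicate (c j) (m + (j:ℕ)), hpos, hSsum⟩
      with hP0
    have hparts : P0.parts = ∑ j : Fin (t+1), Multiset.replicate (c j) (m + (j:ℕ)) := rfl
    have hne : P0.parts ≠ 0 := by
      rw [hparts]
      intro h0
      rw [h0] at hmS
      exact Multiset.notMem_zero m hmS
    have hbd : ∀ a ∈ P0.parts, ∀ b ∈ P0.parts, a ≤ b + t := by
      rw [hparts]
      intro a ha b hb
      have h1 := hmemS a ha
      have h2 := hmemS b hb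
      omega
    set Pf : {P : n.Partition // P.parts ≠ 0 ∧ ∀ a ∈ P.parts, ∀ b ∈ P.parts, a ≤ b + t} :=
      ⟨P0, hne, hbd⟩ with hPf
    refine ⟨Pf, ?_⟩
    apply Subtype.ext
    show toLattice Pf = x
    have hmS' : m ∈ Pf.1.parts := hmS
    have hpm : partM Pf = m := by
      apply le_antisymm (partM_le Pf hmS')
      have := hmemS _ (partM_mem Pf)
      exact this.1
    have hpc : partC Pf = c := by
      funext j
      show Pf.1.parts.count (partM Pf + (j:ℕ)) = c j
      rw [hpm]
      exact count_decomp c j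
    show ∑ i : Fin (t+1), (partC Pf i : ℤ) • geneVZ t (partM Pf + (i:ℕ)) = x
    rw [hpm, hpc]
    exact hxeq.symm
end

section
/- Fix integers t ≥ 1, m ≥ 1, and n ≥ 1. Then the number of points x ∈ ℤ^{t+1} with t dividing x_t, x ∈ C_m, and ∑_{i=0}^{t} x_i = n equals the number of partitions of n whose smallest part equals m and whose largest part is at most m + t. -/
namespace LCAux

/-- ℕ-valued generator. -/
def geneVN (t i : ℕ) : Fin (t + 1) → ℕ := fun l =>
  if (l : ℕ) = t then ((i - 1) / t) * t
  else if (l : ℕ) ≤ (i - 1) % t then 1 else 0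

lemma geneV_eq_cast (t i : ℕ) (l : Fin (t + 1)) :
    geneV t i l = (geneVN t i l : ℝ) := by
  unfold geneV geneVN
  split_ifs <;> simp

lemma sum_ite_le (t r : ℕ) (hr : r < t) :
    ∑ l ∈ Finset.range t, (if l ≤ r then (1 : ℕ) else 0) = r + 1 := by
  have h1 : ∑ l ∈ Finset.range t, (if l ≤ r then (1 : ℕ) else 0)
      = ((Finset.range t).filter (fun l => l ≤ r)).card := by
    rw [Finset.card_filter]
  have h2 : (Finset.range t).filter (fun l => l ≤ r) = Finset.range (r + 1) := by
    ext l
    simp only [Finset.mem_filter, Finset.mem_range]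
    omega
  rw [h1, h2, Finset.card_range]

lemma geneVN_sum (t i : ℕ) (ht : 1 ≤ t) (hi : 1 ≤ i) :
    ∑ l : Fin (t + 1), geneVN t i l = i := by
  rw [Fin.sum_univ_castSucc]
  have h1 : geneVN t i (Fin.last t) = (i - 1) / t * t := by
    simp [geneVN]
  have h2 : ∀ l : Fin t, geneVN t i (Fin.castSucc l)
      = if (l : ℕ) ≤ (i - 1) % t then 1 else 0 := by
    intro l
    have hne : ((Fin.castSucc l : Fin (t + 1)) : ℕ) ≠ t := by
      simpa using Nat.ne_of_lt l.isLt
    simp only [geneVN, if_neg hne]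
    rfl
  rw [h1, Finset.sum_congr rfl (fun l _ => h2 l)]
  rw [Fin.sum_univ_eq_sum_range (fun l => if l ≤ (i - 1) % t then 1 else 0) t]
  rw [sum_ite_le t _ (Nat.mod_lt _ ht)]
  have h4 := Nat.mod_add_div (i - 1) t
  have h5 : (i - 1) / t * t = t * ((i - 1) / t) := Nat.mul_comm _ _
  omega

end LCAux
namespace LCAux

/-- Real coordinates, padded with `0` at indices `≥ t` (note: coordinate `t` is NOT included). -/
noncomputable def Xr (t : ℕ) (x : Fin (t + 1) → ℝ) : ℕ → ℝ := fun l =>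
  if h : l < t then x ⟨l, by omega⟩ else 0

section Core

variable {t m : ℕ} {x α : Fin (t + 1) → ℝ}

lemma coord_formula (ht : 1 ≤ t) (hm : 1 ≤ m)
    (hx : ∀ l, x l = ∑ i : Fin (t + 1), α i * (geneVN t (m + (i : ℕ)) l : ℝ))
    (l : ℕ) (hl : l < t) :
    Xr t x l = ∑ i : Fin (t + 1), α i * (if l ≤ (m - 1 + (i : ℕ)) % t then 1 else 0) := by
  rw [Xr]
  rw [dif_pos hl, hx]
  refine Finset.sum_congr rfl fun i _ => ?_
  congr 1
  have h1 : m + (i : ℕ) - 1 = m - 1 + (i : ℕ) := by omega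
  have h2 : ((⟨l, by omega⟩ : Fin (t + 1)) : ℕ) = l := rfl
  rw [geneVN, h2, if_neg (by omega), h1]
  split_ifs <;> simp

lemma delta (ht : 1 ≤ t) (hm : 1 ≤ m)
    (hx : ∀ l, x l = ∑ i : Fin (t + 1), α i * (geneVN t (m + (i : ℕ)) l : ℝ))
    (l : ℕ) (hl : l < t) :
    Xr t x l - Xr t x (l + 1)
      = ∑ i : Fin (t + 1), α i * (if (m - 1 + (i : ℕ)) % t = l then 1 else 0) := by
  rcases Nat.lt_or_ge (l + 1) t with h | h
  · rw [coord_formula ht hm hx l hl, coord_formula ht hm hx (l + 1) h,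
      ← Finset.sum_sub_distrib]
    refine Finset.sum_congr rfl fun i _ => ?_
    rw [← mul_sub]
    congr 1
    split_ifs <;> norm_num <;> omega
  · have hl1 : l + 1 = t := by omega
    rw [coord_formula ht hm hx l hl, Xr, dif_neg (by omega), sub_zero]
    refine Finset.sum_congr rfl fun i _ => ?_
    congr 1
    have hmlt := Nat.mod_lt (m - 1 + (i : ℕ)) (show 0 < t by omega)
    by_cases hc : (m - 1 + (i : ℕ)) % t = l
    · rw [if_pos (by omega), if_pos hc]
    · rw [if_neg (by omega), if_neg hc]

lemma alpha_mid (ht : 1 ≤ t) (hm : 1 ≤ m)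
    (hx : ∀ l, x l = ∑ i : Fin (t + 1), α i * (geneVN t (m + (i : ℕ)) l : ℝ))
    (i₀ : Fin (t + 1)) (h1 : 1 ≤ (i₀ : ℕ)) (h2 : (i₀ : ℕ) < t) :
    α i₀ = Xr t x ((m - 1 + (i₀ : ℕ)) % t) - Xr t x ((m - 1 + (i₀ : ℕ)) % t + 1) := by
  rw [delta ht hm hx _ (Nat.mod_lt _ (by omega))]
  rw [Finset.sum_eq_single i₀]
  · rw [if_pos rfl, mul_one]
  · intro b _ hb
    rw [if_neg, mul_zero]
    intro hmod
    apply hb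
    have hcan : (b : ℕ) % t = (i₀ : ℕ) % t :=
      Nat.ModEq.add_left_cancel' (m - 1) (hmod : (m - 1 + (b : ℕ)) ≡ (m - 1 + (i₀ : ℕ)) [MOD t])
    have hbt : (b : ℕ) ≤ t := Nat.lt_succ_iff.mp b.isLt
    have e1 : (i₀ : ℕ) % t = (i₀ : ℕ) := Nat.mod_eq_of_lt h2
    rcases Nat.lt_or_ge (b : ℕ) t with hb' | hb'
    · exact Fin.ext (by rw [Nat.mod_eq_of_lt hb'] at hcan; omega)
    · have hbt' : (b : ℕ) = t := le_antisymm hbt hb'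
      rw [hbt', Nat.mod_self] at hcan
      omega
  · intro h
    exact absurd (Finset.mem_univ i₀) h

lemma alpha_ends (ht : 1 ≤ t) (hm : 1 ≤ m)
    (hx : ∀ l, x l = ∑ i : Fin (t + 1), α i * (geneVN t (m + (i : ℕ)) l : ℝ)) :
    α 0 + α (Fin.last t) = Xr t x ((m - 1) % t) - Xr t x ((m - 1) % t + 1) := by
  rw [delta ht hm hx _ (Nat.mod_lt _ (by omega))]
  rw [Finset.sum_eq_add_of_mem 0 (Fin.last t) (Finset.mem_univ _) (Finset.mem_univ _)
      (by simp [Fin.ext_iff]; omega)]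
  · simp [Fin.val_last, Nat.add_mod_right]
  · intro c _ hc
    rw [if_neg, mul_zero]
    intro hmod
    have hcan : (c : ℕ) % t = 0 % t := by
      refine Nat.ModEq.add_left_cancel' (m - 1) ?_
      exact hmod
    rw [Nat.zero_mod] at hcan
    have hct : (c : ℕ) ≤ t := Nat.lt_succ_iff.mp c.isLt
    have hc0 : (c : ℕ) ≠ 0 := fun h => hc.1 (Fin.ext h)
    have hcT : (c : ℕ) ≠ t := fun h => hc.2 (Fin.ext h)
    rw [Nat.mod_eq_of_lt (by omega)] at hcan
    omega

lemma alpha_sum (ht : 1 ≤ t) (hm : 1 ≤ m)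
    (hx : ∀ l, x l = ∑ i : Fin (t + 1), α i * (geneVN t (m + (i : ℕ)) l : ℝ)) :
    ∑ i : Fin (t + 1), α i = Xr t x 0 := by
  rw [coord_formula ht hm hx 0 (by omega)]
  exact Finset.sum_congr rfl fun i _ => by simp

lemma top_formula (ht : 1 ≤ t) (hm : 1 ≤ m)
    (hx : ∀ l, x l = ∑ i : Fin (t + 1), α i * (geneVN t (m + (i : ℕ)) l : ℝ)) :
    x (Fin.last t)
      = ∑ i : Fin (t + 1), α i * ((((m - 1 + (i : ℕ)) / t : ℕ) : ℝ) * (t : ℝ)) := by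
  rw [hx]
  refine Finset.sum_congr rfl fun i _ => ?_
  congr 1
  have hlz : ((Fin.last t : Fin (t + 1)) : ℕ) = t := rfl
  have h1 : m + (i : ℕ) - 1 = m - 1 + (i : ℕ) := by omega
  rw [geneVN, hlz, if_pos rfl, h1]
  push_cast
  ring

lemma div_split (ht : 1 ≤ t) (hm : 1 ≤ m) (i : ℕ) (hi : i ≤ t) :
    (m - 1 + i) / t = (m - 1) / t + (if t ≤ (m - 1) % t + i then 1 else 0) := by
  have h := Nat.mod_add_div (m - 1) t
  have hr : (m - 1) % t < t := Nat.mod_lt _ (by omega)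
  have he : m - 1 + i = (m - 1) % t + i + t * ((m - 1) / t) := by omega
  rw [he, Nat.add_mul_div_left _ _ (show 0 < t by omega)]
  rw [Nat.add_comm]
  congr 1
  split_ifs with hc
  · exact Nat.div_eq_of_lt_le (by omega) (by omega)
  · exact Nat.div_eq_of_lt (by omega)

lemma top_split (ht : 1 ≤ t) (hm : 1 ≤ m)
    (hx : ∀ l, x l = ∑ i : Fin (t + 1), α i * (geneVN t (m + (i : ℕ)) l : ℝ)) :
    x (Fin.last t)
      = ((((m - 1) / t : ℕ) : ℝ) * Xr t x 0
          + (α (Fin.last t)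
              + ∑ i : Fin t, α (Fin.castSucc i) *
                  (if t ≤ (m - 1) % t + (i : ℕ) then (1 : ℝ) else 0))) * (t : ℝ) := by
  rw [top_formula ht hm hx]
  have key : ∀ i : Fin (t + 1),
      α i * ((((m - 1 + (i : ℕ)) / t : ℕ) : ℝ) * (t : ℝ))
        = (α i * (((m - 1) / t : ℕ) : ℝ)
            + α i * (if t ≤ (m - 1) % t + (i : ℕ) then (1 : ℝ) else 0)) * (t : ℝ) := by
    intro i
    rw [div_split ht hm (i : ℕ) (Nat.lt_succ_iff.mp i.isLt)]
    push_cast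
    split_ifs <;> ring
  rw [Finset.sum_congr rfl fun i _ => key i, ← Finset.sum_mul]
  congr 1
  rw [Finset.sum_add_distrib, ← Finset.sum_mul, alpha_sum ht hm hx]
  congr 1
  · ring
  · rw [Fin.sum_univ_castSucc]
    simp only [Fin.coe_castSucc, Fin.val_last]
    rw [if_pos (by omega : t ≤ (m - 1) % t + t), mul_one]
    exact add_comm _ _

end Core

end LCAux
namespace LCAux

section Uniq

variable {t m : ℕ} {x : Fin (t + 1) → ℝ}

lemma alpha_unique (ht : 1 ≤ t) (hm : 1 ≤ m) {α α' : Fin (t + 1) → ℝ}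
    (hx : ∀ l, x l = ∑ i : Fin (t + 1), α i * (geneVN t (m + (i : ℕ)) l : ℝ))
    (hx' : ∀ l, x l = ∑ i : Fin (t + 1), α' i * (geneVN t (m + (i : ℕ)) l : ℝ)) :
    α = α' := by
  have hmid : ∀ i : Fin (t + 1), 1 ≤ (i : ℕ) → (i : ℕ) < t → α i = α' i := by
    intro i h1 h2
    rw [alpha_mid ht hm hx i h1 h2, alpha_mid ht hm hx' i h1 h2]
  have hS : ∑ i : Fin t, α (Fin.castSucc i) * (if t ≤ (m - 1) % t + (i : ℕ) then (1 : ℝ) else 0)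
      = ∑ i : Fin t, α' (Fin.castSucc i) * (if t ≤ (m - 1) % t + (i : ℕ) then (1 : ℝ) else 0) := by
    refine Finset.sum_congr rfl fun i _ => ?_
    rcases Nat.eq_zero_or_pos (i : ℕ) with h | h
    · have : ¬ t ≤ (m - 1) % t + (i : ℕ) := by
        have := Nat.mod_lt (m - 1) (show 0 < t by omega)
        omega
      rw [if_neg this, mul_zero, mul_zero]
    · rw [hmid (Fin.castSucc i) (by rw [Fin.coe_castSucc]; omega) (by simpa using i.isLt)]
  have htop : α (Fin.last t) = α' (Fin.last t) := by
    have e1 := top_split ht hm hx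
    have e2 := top_split ht hm hx'
    rw [e1] at e2
    have ht0 : (t : ℝ) ≠ 0 := by positivity
    have e3 := mul_right_cancel₀ ht0 e2
    rw [hS] at e3
    linarith
  have hzero : α 0 = α' 0 := by
    have e1 := alpha_ends ht hm hx
    have e2 := alpha_ends ht hm hx'
    rw [← e2] at e1
    linarith
  funext i
  rcases Nat.eq_zero_or_pos (i : ℕ) with h | h
  · have : i = 0 := Fin.ext h
    rw [this]; exact hzero
  rcases Nat.lt_or_ge (i : ℕ) t with h2 | h2
  · exact hmid i h h2
  · have : i = Fin.last t := Fin.ext (by have := Nat.lt_succ_iff.mp i.isLt; simp [Fin.val_last]; omega)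
    rw [this]; exact htop

lemma alpha_int (ht : 1 ≤ t) (hm : 1 ≤ m) (xz : Fin (t + 1) → ℤ) {α : Fin (t + 1) → ℝ}
    (hx : ∀ l, ((xz l : ℝ)) = ∑ i : Fin (t + 1), α i * (geneVN t (m + (i : ℕ)) l : ℝ))
    (hdvd : (t : ℤ) ∣ xz (Fin.last t)) :
    ∀ i, ∃ k : ℤ, α i = (k : ℝ) := by
  set x : Fin (t + 1) → ℝ := fun l => (xz l : ℝ) with hxdef
  have hx2 : ∀ l, x l = ∑ i : Fin (t + 1), α i * (geneVN t (m + (i : ℕ)) l : ℝ) := hx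
  have hXint : ∀ l, ∃ k : ℤ, Xr t x l = (k : ℝ) := by
    intro l
    rw [Xr]
    split
    · exact ⟨xz ⟨l, by omega⟩, rfl⟩
    · exact ⟨0, by norm_num⟩
  have hmidint : ∀ i : Fin (t + 1), 1 ≤ (i : ℕ) → (i : ℕ) < t → ∃ k : ℤ, α i = (k : ℝ) := by
    intro i h1 h2
    obtain ⟨k1, hk1⟩ := hXint ((m - 1 + (i : ℕ)) % t)
    obtain ⟨k2, hk2⟩ := hXint ((m - 1 + (i : ℕ)) % t + 1)
    exact ⟨k1 - k2, by rw [alpha_mid ht hm hx2 i h1 h2, hk1, hk2]; push_cast; ring⟩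
  have hSint : ∃ s : ℤ,
      ∑ i : Fin t, α (Fin.castSucc i) * (if t ≤ (m - 1) % t + (i : ℕ) then (1 : ℝ) else 0)
        = (s : ℝ) := by
    have hterm : ∀ i : Fin t, ∃ k : ℤ,
        α (Fin.castSucc i) * (if t ≤ (m - 1) % t + (i : ℕ) then (1 : ℝ) else 0) = (k : ℝ) := by
      intro i
      rcases Nat.eq_zero_or_pos (i : ℕ) with h | h
      · refine ⟨0, ?_⟩
        have : ¬ t ≤ (m - 1) % t + (i : ℕ) := by
          have := Nat.mod_lt (m - 1) (show 0 < t by omega)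
          omega
        rw [if_neg this, mul_zero]; norm_num
      · obtain ⟨k, hk⟩ := hmidint (Fin.castSucc i) (by rw [Fin.coe_castSucc]; omega) (by simpa using i.isLt)
        refine ⟨if t ≤ (m - 1) % t + (i : ℕ) then k else 0, ?_⟩
        rw [hk]
        split_ifs <;> simp
    choose k hk using hterm
    refine ⟨∑ i, k i, ?_⟩
    rw [Finset.sum_congr rfl fun i _ => hk i]
    push_cast
    rfl
  obtain ⟨K, hK⟩ := hdvd
  obtain ⟨s, hs⟩ := hSint
  obtain ⟨k0, hk0⟩ := hXint 0
  have htopint : ∃ k : ℤ, α (Fin.last t) = (k : ℝ) := by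
    refine ⟨K - ((m - 1) / t : ℕ) * k0 - s, ?_⟩
    have e1 := top_split ht hm hx2
    rw [hk0, hs] at e1
    have e2 : x (Fin.last t) = (t : ℝ) * (K : ℝ) := by
      show ((xz (Fin.last t) : ℝ)) = _
      rw [hK]; push_cast; ring
    rw [e2] at e1
    have ht0 : (t : ℝ) ≠ 0 := by positivity
    have e3 : (K : ℝ) = (((m - 1) / t : ℕ) : ℝ) * (k0 : ℝ) + (α (Fin.last t) + (s : ℝ)) := by
      apply mul_left_cancel₀ ht0
      rw [e1]; ring
    have e4 : ((K - ((m - 1) / t : ℕ) * k0 - s : ℤ) : ℝ)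
        = (K : ℝ) - (((m - 1) / t : ℕ) : ℝ) * (k0 : ℝ) - (s : ℝ) := by
      simp only [Int.cast_sub, Int.cast_mul, Int.cast_natCast]
    rw [e4]; linarith
  obtain ⟨kt, hkt⟩ := htopint
  have hzeroint : ∃ k : ℤ, α 0 = (k : ℝ) := by
    obtain ⟨k1, hk1⟩ := hXint ((m - 1) % t)
    obtain ⟨k2, hk2⟩ := hXint ((m - 1) % t + 1)
    refine ⟨k1 - k2 - kt, ?_⟩
    have e1 := alpha_ends ht hm hx2
    rw [hk1, hk2, hkt] at e1
    push_cast
    linarith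
  intro i
  rcases Nat.eq_zero_or_pos (i : ℕ) with h | h
  · have : i = 0 := Fin.ext h
    rw [this]; exact hzeroint
  rcases Nat.lt_or_ge (i : ℕ) t with h2 | h2
  · exact hmidint i h h2
  · have : i = Fin.last t := Fin.ext (by have := Nat.lt_succ_iff.mp i.isLt; simp [Fin.val_last]; omega)
    rw [this]; exact ⟨kt, hkt⟩

end Uniq

end LCAux
namespace LCAux

section Maps

/-- The lattice point associated to a multiplicity vector. -/
def fwd (t m : ℕ) (c : Fin (t + 1) → ℕ) : Fin (t + 1) → ℤ :=
  fun l => ∑ i : Fin (t + 1), (c i : ℤ) * (geneVN t (m + (i : ℕ)) l : ℤ)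

variable {t m : ℕ}

lemma fwd_cast (c : Fin (t + 1) → ℕ) (l : Fin (t + 1)) :
    ((fwd t m c l : ℤ) : ℝ)
      = ∑ i : Fin (t + 1), ((c i : ℕ) : ℝ) * (geneVN t (m + (i : ℕ)) l : ℝ) := by
  rw [fwd]
  push_cast
  rfl

lemma fwd_dvd (c : Fin (t + 1) → ℕ) : (t : ℤ) ∣ fwd t m c (Fin.last t) := by
  rw [fwd]
  refine Finset.dvd_sum fun i _ => ?_
  have h1 : geneVN t (m + (i : ℕ)) (Fin.last t) = (m + (i : ℕ) - 1) / t * t := by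
    simp [geneVN]
  rw [h1]
  have h2 : (t : ℤ) ∣ ((((m + (i : ℕ) - 1) / t * t : ℕ)) : ℤ) := by
    exact_mod_cast Int.natCast_dvd_natCast.mpr (dvd_mul_left t ((m + (i : ℕ) - 1) / t))
  exact h2.mul_left _

lemma fwd_sum (ht : 1 ≤ t) (hm : 1 ≤ m) (c : Fin (t + 1) → ℕ) :
    ∑ l, fwd t m c l = ((∑ i : Fin (t + 1), c i * (m + (i : ℕ)) : ℕ) : ℤ) := by
  rw [show (∑ l, fwd t m c l)
      = ∑ l : Fin (t + 1), ∑ i : Fin (t + 1), (c i : ℤ) * (geneVN t (m + (i : ℕ)) l : ℤ) from rfl]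
  rw [Finset.sum_comm]
  push_cast
  refine Finset.sum_congr rfl fun i _ => ?_
  rw [← Finset.mul_sum]
  congr 1
  rw [← Nat.cast_sum]
  rw [geneVN_sum t (m + (i : ℕ)) ht (by omega)]
  push_cast
  ring

/-- The multiset of parts associated to a multiplicity vector. -/
def pmul (t m : ℕ) (c : Fin (t + 1) → ℕ) : Multiset ℕ :=
  ∑ i : Fin (t + 1), Multiset.replicate (c i) (m + (i : ℕ))

lemma count_pmul (c : Fin (t + 1) → ℕ) (j : Fin (t + 1)) :
    (pmul t m c).count (m + (j : ℕ)) = c j := by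
  rw [pmul, Multiset.count_sum']
  rw [Finset.sum_eq_single j]
  · rw [Multiset.count_replicate, if_pos rfl]
  · intro b _ hb
    rw [Multiset.count_replicate, if_neg]
    intro h
    exact hb (Fin.ext (by omega))
  · intro h
    exact absurd (Finset.mem_univ j) h

lemma mem_pmul (c : Fin (t + 1) → ℕ) (a : ℕ) :
    a ∈ pmul t m c ↔ ∃ i : Fin (t + 1), c i ≠ 0 ∧ a = m + (i : ℕ) := by
  rw [pmul, Multiset.mem_sum]
  constructor
  · rintro ⟨i, _, hi⟩
    exact ⟨i, (Multiset.mem_replicate.mp hi).1, (Multiset.mem_replicate.mp hi).2⟩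
  · rintro ⟨i, h1, h2⟩
    exact ⟨i, Finset.mem_univ i, Multiset.mem_replicate.mpr ⟨h1, h2⟩⟩

lemma multiset_sum_sum {β : Type*} (s : Finset β) (f : β → Multiset ℕ) :
    (∑ i ∈ s, f i).sum = ∑ i ∈ s, (f i).sum :=
  map_sum Multiset.sumAddMonoidHom f s

lemma sum_pmul (c : Fin (t + 1) → ℕ) :
    (pmul t m c).sum = ∑ i : Fin (t + 1), c i * (m + (i : ℕ)) := by
  rw [pmul, multiset_sum_sum]
  exact Finset.sum_congr rfl fun i _ => by
    rw [Multiset.sum_replicate, smul_eq_mul]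

end Maps

end LCAux
namespace LCAux

section Equivs

variable (t m n : ℕ)

/-- Forward map from multiplicity vectors to lattice points. -/
noncomputable def toLat (ht : 1 ≤ t) (hm : 1 ≤ m) :
    { c : Fin (t + 1) → ℕ // 1 ≤ c 0 ∧ ∑ i : Fin (t + 1), c i * (m + (i : ℕ)) = n } →
    { x : Fin (t + 1) → ℤ //
        (t : ℤ) ∣ x (Fin.last t) ∧
        (fun j => (x j : ℝ)) ∈ coneC t m ∧
        ∑ i, x i = (n : ℤ) } :=
  fun cc => ⟨fwd t m cc.1, by
    refine ⟨fwd_dvd cc.1, ⟨fun i => ((cc.1 i : ℕ) : ℝ), ?_, fun i => by positivity, ?_⟩, ?_⟩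
    · show (0 : ℝ) < ((cc.1 0 : ℕ) : ℝ)
      exact_mod_cast cc.2.1
    · funext l
      rw [Finset.sum_apply]
      show ((fwd t m cc.1 l : ℤ) : ℝ) = _
      rw [fwd_cast]
      exact Finset.sum_congr rfl fun i _ => by simp [geneV_eq_cast]
    · rw [fwd_sum ht hm cc.1, cc.2.2]⟩

lemma toLat_bijective (ht : 1 ≤ t) (hm : 1 ≤ m) : Function.Bijective (toLat t m n ht hm) := by
  constructor
  · rintro ⟨c, hc⟩ ⟨c', hc'⟩ h
    have hf : fwd t m c = fwd t m c' := congrArg Subtype.val h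
    have hx : ∀ l, (((fwd t m c l : ℤ) : ℝ))
        = ∑ i : Fin (t + 1), ((c i : ℕ) : ℝ) * (geneVN t (m + (i : ℕ)) l : ℝ) :=
      fun l => fwd_cast c l
    have hx' : ∀ l, (((fwd t m c l : ℤ) : ℝ))
        = ∑ i : Fin (t + 1), ((c' i : ℕ) : ℝ) * (geneVN t (m + (i : ℕ)) l : ℝ) :=
      fun l => by rw [hf]; exact fwd_cast c' l
    have := alpha_unique ht hm hx hx'
    refine Subtype.ext (funext fun i => ?_)
    have h2 : ((c i : ℕ) : ℝ) = ((c' i : ℕ) : ℝ) := congrFun this i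
    exact_mod_cast h2
  · rintro ⟨x, hdvd, ⟨α, hα0, hαnn, heq⟩, hsum⟩
    have hx : ∀ l, ((x l : ℝ)) = ∑ i : Fin (t + 1), α i * (geneVN t (m + (i : ℕ)) l : ℝ) := by
      intro l
      simpa only [Finset.sum_apply, Pi.smul_apply, smul_eq_mul, geneV_eq_cast]
        using congrFun heq l
    choose k hk using alpha_int ht hm x hx hdvd
    have hknn : ∀ i, 0 ≤ k i := fun i => by
      have h := hαnn i
      rw [hk i] at h
      exact_mod_cast h
    set c : Fin (t + 1) → ℕ := fun i => (k i).toNat with hcdef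
    have hcast : ∀ i, ((c i : ℕ) : ℝ) = α i := by
      intro i
      rw [hk i]
      have h3 : ((c i : ℕ) : ℤ) = k i := Int.toNat_of_nonneg (hknn i)
      exact_mod_cast h3
    have hfwd : fwd t m c = x := by
      funext l
      have h4 : ((fwd t m c l : ℤ) : ℝ) = ((x l : ℤ) : ℝ) := by
        rw [fwd_cast, hx l]
        exact Finset.sum_congr rfl fun i _ => by rw [hcast]
      exact_mod_cast h4
    have hc0 : 1 ≤ c 0 := by
      have h := hα0
      rw [← hcast 0] at h
      exact_mod_cast h
    have hcs : ∑ i : Fin (t + 1), c i * (m + (i : ℕ)) = n := by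
      have h5 := fwd_sum ht hm c
      rw [hfwd, hsum] at h5
      exact_mod_cast h5.symm
    exact ⟨⟨c, hc0, hcs⟩, Subtype.ext hfwd⟩

/-- Forward map from multiplicity vectors to partitions. -/
def toPart (hm : 1 ≤ m) :
    { c : Fin (t + 1) → ℕ // 1 ≤ c 0 ∧ ∑ i : Fin (t + 1), c i * (m + (i : ℕ)) = n } →
    { P : n.Partition // m ∈ P.parts ∧ ∀ a ∈ P.parts, m ≤ a ∧ a ≤ m + t } :=
  fun cc =>
    ⟨⟨pmul t m cc.1,
      by
        intro a ha
        obtain ⟨i, _, hi⟩ := (mem_pmul cc.1 a).mp ha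
        omega,
      by rw [sum_pmul]; exact cc.2.2⟩,
      by
        refine ⟨?_, fun a ha => ?_⟩
        · refine (mem_pmul cc.1 m).mpr ⟨0, by omega, ?_⟩
          simp
        · obtain ⟨i, _, hi⟩ := (mem_pmul cc.1 a).mp ha
          have := Nat.lt_succ_iff.mp i.isLt
          omega⟩

lemma toPart_bijective (hm : 1 ≤ m) : Function.Bijective (toPart t m n hm) := by
  constructor
  · rintro ⟨c, hc⟩ ⟨c', hc'⟩ h
    have h2 : (toPart t m n hm ⟨c, hc⟩).1.parts = (toPart t m n hm ⟨c', hc'⟩).1.parts := by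
      rw [h]
    have hparts : pmul t m c = pmul t m c' := h2
    refine Subtype.ext (funext fun j => ?_)
    show c j = c' j
    rw [← count_pmul c j, ← count_pmul c' j, hparts]
  · rintro ⟨P, hmem, hbd⟩
    set c : Fin (t + 1) → ℕ := fun j => P.parts.count (m + (j : ℕ)) with hcdef
    have key : pmul t m c = P.parts := by
      ext a
      by_cases ha : a ∈ P.parts
      · obtain ⟨hma, hat⟩ := hbd a ha
        have haj : a = m + ((⟨a - m, by omega⟩ : Fin (t + 1)) : ℕ) := by
          simp; omega
        rw [haj, count_pmul c]
      · rw [Multiset.count_eq_zero_of_notMem ha, Multiset.count_eq_zero_of_notMem]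
        intro hmem2
        obtain ⟨i, hi0, hia⟩ := (mem_pmul c a).mp hmem2
        apply hi0
        show P.parts.count (m + (i : ℕ)) = 0
        rw [← hia]
        exact Multiset.count_eq_zero_of_notMem ha
    have hc0 : 1 ≤ c 0 := by
      have h0 : m + ((0 : Fin (t + 1)) : ℕ) = m := by simp
      show 1 ≤ P.parts.count (m + ((0 : Fin (t + 1)) : ℕ))
      rw [h0]
      exact Multiset.count_pos.mpr hmem
    have hcs : ∑ i : Fin (t + 1), c i * (m + (i : ℕ)) = n := by
      rw [← sum_pmul, key]
      exact P.parts_sum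
    exact ⟨⟨c, hc0, hcs⟩, Subtype.ext (Nat.Partition.ext key)⟩

end Equivs

end LCAux

/-- The number of lattice points of `Λ = ℤ^t × tℤ` in `C_m` at height `n` equals the
number of partitions of `n` with smallest part exactly `m` and largest part at most
`m + t`. -/
theorem lattice_points_in_cone_eq_partitions (t m n : ℕ)
    (ht : 1 ≤ t) (hm : 1 ≤ m) (hn : 1 ≤ n) :
    Nat.card { x : Fin (t + 1) → ℤ //
        (t : ℤ) ∣ x (Fin.last t) ∧
        (fun j => (x j : ℝ)) ∈ coneC t m ∧
        ∑ i, x i = (n : ℤ) }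
      = Nat.card { P : n.Partition //
          m ∈ P.parts ∧ ∀ a ∈ P.parts, m ≤ a ∧ a ≤ m + t } := by
  rw [← Nat.card_congr (Equiv.ofBijective _ (LCAux.toLat_bijective t m n ht hm))]
  rw [← Nat.card_congr (Equiv.ofBijective _ (LCAux.toPart_bijective t m n hm))]
end

section
/- For every integer t ≥ 1 and every integer n ≥ 1, the number p(n,t) of partitions of n whose difference between largest and smallest part is at most t equals the number of pairs (λ, ℓ) where ℓ is a non-negative integer divisible by t and λ is a non-empty partition of n − ℓ whose largest part is at most t. -/
namespace BDCaux

/-- residue part: for `b ≥ 1`, the unique `r ∈ [1,t]` with `r ≡ b (mod t)`. -/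
def r (t b : ℕ) : ℕ := (b - 1) % t + 1
/-- quotient part -/
def q (t b : ℕ) : ℕ := (b - 1) / t

def F1 (t : ℕ) (μ : Multiset ℕ) : ℕ := (μ.map (q t)).sum
def F2 (t : ℕ) (μ : Multiset ℕ) : Multiset ℕ := μ.map (r t)

lemma r_pos {t b : ℕ} : 0 < r t b := Nat.succ_pos _

lemma r_le {t b : ℕ} (ht : 1 ≤ t) : r t b ≤ t := by
  have := Nat.mod_lt (b - 1) (show 0 < t from ht); unfold r; omega

lemma r_eq_self {t b : ℕ} (h1 : 1 ≤ b) (h2 : b ≤ t) : r t b = b := by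
  unfold r; rw [Nat.mod_eq_of_lt (show b - 1 < t by omega)]; omega

lemma q_eq_zero {t b : ℕ} (ht : 1 ≤ t) (h2 : b ≤ t) : q t b = 0 := Nat.div_eq_of_lt (by omega)

lemma le_of_q_eq_zero {t b : ℕ} (ht : 1 ≤ t) (h : q t b = 0) : b ≤ t := by
  unfold q at h
  have := Nat.div_eq_zero_iff.1 h
  omega

lemma r_add {t b : ℕ} (h1 : 1 ≤ b) : r t (b + t) = r t b := by
  unfold r
  rw [show b + t - 1 = (b - 1) + t by omega, Nat.add_mod_right]

lemma q_add {t b : ℕ} (ht : 1 ≤ t) (h1 : 1 ≤ b) : q t (b + t) = q t b + 1 := by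
  unfold q
  rw [show b + t - 1 = (b - 1) + t by omega, Nat.add_div_right _ ht]

lemma rq_sum {t b : ℕ} (h1 : 1 ≤ b) : r t b + t * q t b = b := by
  unfold r q; have := Nat.mod_add_div (b - 1) t; omega

lemma sum_eq {t : ℕ} {μ : Multiset ℕ} (hpos : ∀ a ∈ μ, 0 < a) :
    (F2 t μ).sum + t * F1 t μ = μ.sum := by
  induction μ using Multiset.induction with
  | empty => simp [F1, F2]
  | cons a s ih =>
    have ha : 0 < a := hpos a (Multiset.mem_cons_self a s)
    have hs := ih (fun x hx => hpos x (Multiset.mem_cons_of_mem hx))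
    have hr := rq_sum (t := t) ha
    simp only [F1, F2, Multiset.map_cons, Multiset.sum_cons] at *
    rw [Nat.mul_add]
    omega

lemma F2_eq_self {t : ℕ} {μ : Multiset ℕ} (h : ∀ b ∈ μ, 0 < b ∧ b ≤ t) : F2 t μ = μ := by
  unfold F2
  rw [show μ.map (r t) = μ.map id from
    Multiset.map_congr rfl fun b hb => r_eq_self (h b hb).1 (h b hb).2, Multiset.map_id]

lemma F1_eq_zero {t : ℕ} {μ : Multiset ℕ} (ht : 1 ≤ t) (h : ∀ b ∈ μ, b ≤ t) : F1 t μ = 0 := by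
  unfold F1
  rw [Multiset.sum_eq_zero_iff]
  intro x hx
  rw [Multiset.mem_map] at hx
  obtain ⟨b, hb, rfl⟩ := hx
  exact q_eq_zero ht (h b hb)

lemma all_le_of_F1_eq_zero {t : ℕ} {μ : Multiset ℕ} (ht : 1 ≤ t) (h : F1 t μ = 0) :
    ∀ b ∈ μ, b ≤ t := by
  intro b hb
  unfold F1 at h
  rw [Multiset.sum_eq_zero_iff] at h
  exact le_of_q_eq_zero ht (h _ (Multiset.mem_map_of_mem _ hb))

def mmin (s : Multiset ℕ) : ℕ := s.sum - (s.map (fun x => s.sum - x)).sup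

lemma sup_mem {s : Multiset ℕ} (h : s ≠ 0) : s.sup ∈ s := by
  induction s using Multiset.induction with
  | empty => simp at h
  | cons a u ih =>
    rcases eq_or_ne u 0 with rfl | hu
    · simp
    · have hmem := ih hu
      simp only [Multiset.sup_cons]
      rcases le_total a u.sup with h1 | h1
      · rw [sup_eq_right.mpr h1]; exact Multiset.mem_cons_of_mem hmem
      · rw [sup_eq_left.mpr h1]; exact Multiset.mem_cons_self a u

lemma mmin_mem {s : Multiset ℕ} (h : s ≠ 0) : mmin s ∈ s := by
  have h' : s.map (fun x => s.sum - x) ≠ 0 := by simpa using h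
  have hsup := sup_mem h'
  rw [Multiset.mem_map] at hsup
  obtain ⟨x, hx, hx'⟩ := hsup
  have hle : x ≤ s.sum := Multiset.single_le_sum (fun _ _ => Nat.zero_le _) _ hx
  have : mmin s = x := by unfold mmin; omega
  rwa [this]

lemma mmin_le {s : Multiset ℕ} {a : ℕ} (ha : a ∈ s) : mmin s ≤ a := by
  have h1 : s.sum - a ≤ (s.map (fun x => s.sum - x)).sup :=
    Multiset.le_sup (Multiset.mem_map_of_mem _ ha)
  have hle : a ≤ s.sum := Multiset.single_le_sum (fun _ _ => Nat.zero_le _) _ ha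
  unfold mmin; omega


/-- Step structure: peel off the largest part `M` (which exceeds `t`) and replace by `M - t`. -/
lemma step {t : ℕ} (ht : 1 ≤ t) {μ : Multiset ℕ}
    (hpos : ∀ a ∈ μ, 0 < a) (hd : ∀ a ∈ μ, ∀ b ∈ μ, a ≤ b + t)
    (hc : 0 < F1 t μ) :
    ∃ M ν, μ = M ::ₘ ν ∧ t < M ∧
      (∀ a ∈ (M - t) ::ₘ ν, 0 < a) ∧
      (∀ a ∈ (M - t) ::ₘ ν, ∀ b ∈ (M - t) ::ₘ ν, a ≤ b + t) ∧
      F1 t ((M - t) ::ₘ ν) + 1 = F1 t μ ∧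
      F2 t ((M - t) ::ₘ ν) = F2 t μ ∧
      M = mmin ((M - t) ::ₘ ν) + t := by
  have hb : ∃ b ∈ μ, t < b := by
    by_contra h
    push_neg at h
    rw [F1_eq_zero ht h] at hc
    exact Nat.lt_irrefl 0 hc
  obtain ⟨b, hbμ, hbt⟩ := hb
  have hμ0 : μ ≠ 0 := fun h => by simp [h] at hbμ
  set M := μ.sup with hMdef
  have hMμ : M ∈ μ := sup_mem hμ0
  have htM : t < M := lt_of_lt_of_le hbt (Multiset.le_sup hbμ)
  set ν := μ.erase M with hνdef
  have hcons : μ = M ::ₘ ν := (Multiset.cons_erase hMμ).symm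
  have hνμ : ∀ x ∈ ν, x ∈ μ := fun x hx => Multiset.mem_of_mem_erase hx
  have hlow : ∀ x ∈ ν, M - t ≤ x := by
    intro x hx
    have := hd M hMμ x (hνμ x hx)
    omega
  have hhigh : ∀ x ∈ ν, x ≤ M := fun x hx => Multiset.le_sup (hνμ x hx)
  have hposT : ∀ a ∈ (M - t) ::ₘ ν, 0 < a := by
    intro a ha
    rcases Multiset.mem_cons.1 ha with rfl | ha
    · omega
    · exact hpos a (hνμ a ha)
  have hdT : ∀ a ∈ (M - t) ::ₘ ν, ∀ b ∈ (M - t) ::ₘ ν, a ≤ b + t := by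
    intro a ha b hb
    have ha' : a ≤ M := by
      rcases Multiset.mem_cons.1 ha with rfl | ha
      · omega
      · exact hhigh a ha
    have hb' : M - t ≤ b := by
      rcases Multiset.mem_cons.1 hb with rfl | hb
      · exact le_refl _
      · exact hlow b hb
    omega
  have hMt1 : 1 ≤ M - t := by omega
  have hMeq : (M - t) + t = M := by omega
  have hq : q t M = q t (M - t) + 1 := by
    have h := q_add (b := M - t) ht hMt1
    rwa [hMeq] at h
  have hr : r t M = r t (M - t) := by
    have h := r_add (t := t) (b := M - t) hMt1
    rwa [hMeq] at h
  have hF1 : F1 t ((M - t) ::ₘ ν) + 1 = F1 t μ := by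
    rw [hcons]
    simp only [F1, Multiset.map_cons, Multiset.sum_cons, hq]
    omega
  have hF2 : F2 t ((M - t) ::ₘ ν) = F2 t μ := by
    rw [hcons]
    simp only [F2, Multiset.map_cons, hr]
  have hmmin : M = mmin ((M - t) ::ₘ ν) + t := by
    have hne : (M - t) ::ₘ ν ≠ 0 := Multiset.cons_ne_zero
    have hmem := mmin_mem hne
    have h1 : mmin ((M - t) ::ₘ ν) ≤ M - t := mmin_le (Multiset.mem_cons_self _ _)
    have h2 : M - t ≤ mmin ((M - t) ::ₘ ν) := by
      rcases Multiset.mem_cons.1 hmem with he | hm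
      · omega
      · exact hlow _ hm
    omega
  exact ⟨M, ν, hcons, htM, hposT, hdT, hF1, hF2, hmmin⟩

lemma F_inj {t : ℕ} (ht : 1 ≤ t) : ∀ c (μ μ' : Multiset ℕ),
    (∀ a ∈ μ, 0 < a) → (∀ a ∈ μ, ∀ b ∈ μ, a ≤ b + t) →
    (∀ a ∈ μ', 0 < a) → (∀ a ∈ μ', ∀ b ∈ μ', a ≤ b + t) →
    F1 t μ = c → F1 t μ' = c → F2 t μ = F2 t μ' → μ = μ' := by
  intro c
  induction c using Nat.strong_induction_on with
  | _ c ih =>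
    intro μ μ' hpos hd hpos' hd' h1 h1' h2
    rcases Nat.eq_zero_or_pos c with rfl | hc
    · have e1 : F2 t μ = μ :=
        F2_eq_self (fun b hb => ⟨hpos b hb, all_le_of_F1_eq_zero ht h1 b hb⟩)
      have e2 : F2 t μ' = μ' :=
        F2_eq_self (fun b hb => ⟨hpos' b hb, all_le_of_F1_eq_zero ht h1' b hb⟩)
      rw [e1, e2] at h2; exact h2
    · obtain ⟨M, ν, hcons, htM, hposT, hdT, hF1, hF2, hmmin⟩ :=
        step ht hpos hd (h1 ▸ hc)
      obtain ⟨M', ν', hcons', htM', hposT', hdT', hF1', hF2', hmmin'⟩ :=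
        step ht hpos' hd' (h1' ▸ hc)
      have hTeq : (M - t) ::ₘ ν = (M' - t) ::ₘ ν' := by
        refine ih (c - 1) (by omega) _ _ hposT hdT hposT' hdT' (by omega) (by omega) ?_
        rw [hF2, hF2', h2]
      have hM : M = M' := by rw [hmmin, hmmin', hTeq]
      have hMt : M - t = M' - t := by omega
      rw [hMt] at hTeq
      have hν : ν = ν' := (Multiset.cons_inj_right _).1 hTeq
      rw [hcons, hcons', hM, hν]

lemma F_surj {t : ℕ} (ht : 1 ≤ t) : ∀ (c : ℕ) (lam : Multiset ℕ), lam ≠ 0 →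
    (∀ a ∈ lam, 0 < a ∧ a ≤ t) →
    ∃ μ, (∀ a ∈ μ, 0 < a) ∧ (∀ a ∈ μ, ∀ b ∈ μ, a ≤ b + t) ∧
      F1 t μ = c ∧ F2 t μ = lam := by
  intro c
  induction c with
  | zero =>
    intro lam _ h
    exact ⟨lam, fun a ha => (h a ha).1,
      fun a ha b hb => by have := (h a ha).2; omega,
      F1_eq_zero ht (fun b hb => (h b hb).2),
      F2_eq_self h⟩
  | succ k ih =>
    intro lam hne h
    obtain ⟨μ, hpos, hd, hF1, hF2⟩ := ih lam hne h
    have hμ0 : μ ≠ 0 := by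
      intro h0
      rw [h0] at hF2
      exact hne (by simpa [F2] using hF2.symm)
    set m := mmin μ with hm
    have hmμ : m ∈ μ := mmin_mem hμ0
    have hm1 : 1 ≤ m := hpos m hmμ
    set ν := μ.erase m with hν
    have hcons : μ = m ::ₘ ν := (Multiset.cons_erase hmμ).symm
    have hνμ : ∀ x ∈ ν, x ∈ μ := fun x hx => Multiset.mem_of_mem_erase hx
    refine ⟨(m + t) ::ₘ ν, ?_, ?_, ?_, ?_⟩
    · intro a ha
      rcases Multiset.mem_cons.1 ha with rfl | ha
      · omega
      · exact hpos a (hνμ a ha)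
    · intro a ha b hb
      have ha' : a ≤ m + t := by
        rcases Multiset.mem_cons.1 ha with rfl | ha
        · exact le_refl _
        · exact hd a (hνμ a ha) m hmμ
      have hb' : m ≤ b := by
        rcases Multiset.mem_cons.1 hb with rfl | hb
        · omega
        · exact mmin_le (hνμ b hb)
      omega
    · rw [hcons] at hF1
      simp only [F1, Multiset.map_cons, Multiset.sum_cons] at hF1 ⊢
      rw [q_add ht hm1]
      omega
    · rw [hcons] at hF2
      simp only [F2, Multiset.map_cons] at hF2 ⊢
      rw [r_add hm1]
      exact hF2

end BDCaux


/-- `p(n,t)` equals the number of pairs `(λ, ℓ)` where `ℓ ≥ 0` is divisible by `t` and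
`λ` is a non-empty partition (a non-empty multiset of positive parts) of `n - ℓ` with
largest part at most `t`.  The pair is encoded as `q = (ℓ, λ)` with `λ.sum + ℓ = n`. -/
theorem bounded_diff_count_eq_pairs (t n : ℕ) (ht : 1 ≤ t) (hn : 1 ≤ n) :
    boundedDiffCount n t
      = Nat.card { q : ℕ × Multiset ℕ //
          t ∣ q.1 ∧ q.2 ≠ 0 ∧ (∀ a ∈ q.2, 0 < a ∧ a ≤ t) ∧ q.2.sum + q.1 = n } := by
  classical
  rw [boundedDiffCount]
  apply Nat.card_congr
  refine Equiv.ofBijective (fun P =>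
    ⟨(t * BDCaux.F1 t P.1.parts, BDCaux.F2 t P.1.parts), ⟨_, rfl⟩, ?_, ?_, ?_⟩) ⟨?_, ?_⟩
  · -- F2 ≠ 0
    simpa [BDCaux.F2, Multiset.map_eq_zero] using P.2.1
  · -- bounds
    intro a ha
    rw [BDCaux.F2, Multiset.mem_map] at ha
    obtain ⟨b, _, rfl⟩ := ha
    exact ⟨BDCaux.r_pos, BDCaux.r_le ht⟩
  · -- sum
    rw [BDCaux.sum_eq (fun a ha => P.1.parts_pos ha)]
    exact P.1.parts_sum
  · -- injective
    rintro ⟨P, hP1, hP2⟩ ⟨Q, hQ1, hQ2⟩ h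
    simp only [Subtype.mk.injEq, Prod.mk.injEq] at h
    have h1 : BDCaux.F1 t P.parts = BDCaux.F1 t Q.parts :=
      Nat.eq_of_mul_eq_mul_left (by omega) h.1
    have hparts : P.parts = Q.parts :=
      BDCaux.F_inj ht (BDCaux.F1 t P.parts) P.parts Q.parts
        (fun a ha => P.parts_pos ha) hP2 (fun a ha => Q.parts_pos ha) hQ2
        rfl h1.symm h.2
    exact Subtype.ext (by ext1; rw [hparts])
  · -- surjective
    rintro ⟨⟨l, lam⟩, hdvd, hne, hbd, hsum⟩
    simp only at hdvd hne hbd hsum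
    obtain ⟨c, rfl⟩ := hdvd
    obtain ⟨μ, hpos, hd, hF1, hF2⟩ := BDCaux.F_surj ht c lam hne hbd
    have hμsum : μ.sum = n := by
      have := BDCaux.sum_eq (t := t) (μ := μ) hpos
      rw [hF1, hF2] at this
      omega
    have hμ0 : μ ≠ 0 := by
      intro h0
      rw [h0] at hF2
      exact hne (by simpa [BDCaux.F2] using hF2.symm)
    refine ⟨⟨⟨μ, fun {a} ha => hpos a ha, hμsum⟩, hμ0, hd⟩, ?_⟩
    exact Subtype.ext (by simp [hF1, hF2])
end

section
/- For every integer t ≥ 2, the following identity holds in the ring of formal power series ℤ⟦X⟧: (∑_{n≥1} p̃(n,t)·Xⁿ) · (1 − X^{t−1}) · (1 − X^t) · ∏_{i=1}^{t} (1 − X^i) = X^{t−1}·(1 − X)·∏_{i=1}^{t} (1 − X^i) − X^{t−1}·(1 − X) + X^t·(1 − X^t). -/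
/-- `p̃ n t` is the number of partitions of `n` whose largest part minus smallest part
equals exactly `t`. -/
noncomputable def fixedDiffCount (n t : ℕ) : ℕ :=
  Nat.card { P : n.Partition // P.parts ≠ 0 ∧
    (∀ a ∈ P.parts, ∀ b ∈ P.parts, a ≤ b + t) ∧
    ∃ a ∈ P.parts, ∃ b ∈ P.parts, a = b + t }

open PowerSeries Finset
open scoped Classical

namespace ABR

noncomputable section

/-- indicator series -/
def indicatorSeries (α : Type*) [Semiring α] (s : Set ℕ) : PowerSeries α :=
  PowerSeries.mk fun n => if n ∈ s then 1 else 0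

theorem coeff_indicator (s : Set ℕ) {α : Type*} [Semiring α] (n : ℕ) :
    coeff n (indicatorSeries α s) = if n ∈ s then 1 else 0 :=
  coeff_mk _ _

/-- geometric series 1/(1-X^i) -/
def gg (i : ℕ) : PowerSeries ℤ := indicatorSeries ℤ {k | i ∣ k}

theorem gg_mul_aux (i : ℕ) :
    (indicatorSeries ℤ {k | i + 1 ∣ k}) * (1 - (X : PowerSeries ℤ) ^ (i + 1)) = 1 := by
  ext n
  cases n with
  | zero => simp [mul_sub, zero_pow, indicatorSeries]
  | succ n =>
    simp only [mul_sub, mul_one, map_sub, coeff_mul_X_pow', coeff_indicator, coeff_one,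
      Set.mem_setOf_eq]
    by_cases hle : i + 1 ≤ n + 1
    · obtain ⟨m, hm⟩ := Nat.exists_eq_add_of_le hle
      rw [if_pos hle, hm, Nat.add_sub_cancel_left]
      simp [Nat.dvd_add_self_left]
    · rw [if_neg hle, if_neg (fun h => hle (Nat.le_of_dvd (Nat.succ_pos n) h))]
      simp

theorem one_sub_X_pow_mul_gg {i : ℕ} (hi : i ≠ 0) :
    (1 - (X : PowerSeries ℤ) ^ i) * gg i = 1 := by
  obtain ⟨m, rfl⟩ := Nat.exists_eq_succ_of_ne_zero hi
  rw [mul_comm]; exact gg_mul_aux m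

theorem isUnit_one_sub_X_pow {i : ℕ} (hi : i ≠ 0) : IsUnit (1 - (X : PowerSeries ℤ) ^ i) :=
  IsUnit.of_mul_eq_one _ (one_sub_X_pow_mul_gg hi)


/-- window product of geometric series over [s, s+k) -/
def prodgg (s k : ℕ) : PowerSeries ℤ := ∏ i ∈ Finset.Ico s (s + k), gg i

/-- `a s k` for fixed `t`: `X^(2s+t) / ∏_{i∈[s,s+k)}(1-X^i)` -/
def aa (t s k : ℕ) : PowerSeries ℤ := X ^ (2 * s + t) * prodgg s k

/-- partial sum over s = 1..S -/
def PP (t k S : ℕ) : PowerSeries ℤ := ∑ s ∈ Finset.Icc 1 S, aa t s k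

/-- full sum, defined coefficientwise -/
def AA (t k : ℕ) : PowerSeries ℤ := PowerSeries.mk fun n => coeff n (PP t k n)

def QQ (m : ℕ) : PowerSeries ℤ := ∏ i ∈ Finset.Icc 1 m, (1 - X ^ i)

def rr : ℕ → PowerSeries ℤ
  | 0 => 1 - X
  | j + 1 => (1 - X ^ (j + 3)) * rr j + X ^ (j + 1) * (1 - X ^ (j + 2))

theorem coeff_X_pow_mul_of_lt {n e : ℕ} (f : PowerSeries ℤ) (h : n < e) :
    coeff n (X ^ e * f) = 0 := by
  rw [coeff_X_pow_mul', if_neg (by omega)]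

theorem coeff_aa_zero {t s k n : ℕ} (h : n < 2 * s + t) : coeff n (aa t s k) = 0 :=
  coeff_X_pow_mul_of_lt _ h

theorem coeff_X_pow_mul_aa_zero {t s k n e : ℕ} (h : n < e + (2 * s + t)) :
    coeff n (X ^ e * aa t s k) = 0 := by
  rw [aa, ← mul_assoc, ← pow_add]
  exact coeff_X_pow_mul_of_lt _ h

/-- the per-s partial fraction identity -/
theorem per_s (t j : ℕ) {s : ℕ} (hs : s ≠ 0) :
    (1 - X ^ (j + 2)) * aa t s (j + 3)
      = aa t s (j + 2) - X ^ j * aa t (s + 1) (j + 2) := by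
  have hsplit3 : prodgg s (j + 3) = gg s * (∏ i ∈ Finset.Ico (s+1) (s+j+2), gg i) * gg (s+j+2) := by
    rw [prodgg, show s + (j+3) = (s+j+2) + 1 by omega,
      Finset.prod_Ico_succ_top (by omega), Finset.prod_eq_prod_Ico_succ_bot (by omega)]
  have hsplit2 : prodgg s (j + 2) = gg s * ∏ i ∈ Finset.Ico (s+1) (s+j+2), gg i := by
    rw [prodgg, show s + (j+2) = s+j+2 by omega, Finset.prod_eq_prod_Ico_succ_bot (by omega)]
  have hsplit2' : prodgg (s+1) (j + 2) = (∏ i ∈ Finset.Ico (s+1) (s+j+2), gg i) * gg (s+j+2) := by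
    rw [prodgg, show s + 1 + (j+2) = (s+j+2)+1 by omega, Finset.prod_Ico_succ_top (by omega)]
  set m := ∏ i ∈ Finset.Ico (s+1) (s+j+2), gg i with hm
  have h1 : (1 - (X : PowerSeries ℤ) ^ s) * gg s = 1 := one_sub_X_pow_mul_gg hs
  have h2 : (1 - (X : PowerSeries ℤ) ^ (s+j+2)) * gg (s+j+2) = 1 :=
    one_sub_X_pow_mul_gg (by omega)
  have hu : IsUnit ((1 - (X : PowerSeries ℤ) ^ s) * (1 - (X : PowerSeries ℤ) ^ (s+j+2))) :=
    (IsUnit.of_mul_eq_one _ h1).mul (IsUnit.of_mul_eq_one _ h2)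
  apply hu.mul_left_cancel
  rw [aa, aa, aa, hsplit3, hsplit2, hsplit2']
  linear_combination (X:PowerSeries ℤ)^(2*s+t) *
      ((1 - X^(j+2)) * (1 - X^(s+j+2)) * m * gg (s+j+2) - (1 - X^(s+j+2)) * m) * h1
    + ((X:PowerSeries ℤ)^(2*s+t) * (1 - X^(j+2)) * m
        + (X:PowerSeries ℤ)^(2*s+t) * (1 - X^s) * X^(j+2) * m) * h2

/-- summed telescoping identity, additive form -/
theorem partial_sum (t j S : ℕ) :
    (1 - X ^ (j + 2)) * PP t (j + 3) S + X ^ j * aa t (S + 1) (j + 2)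
        + X ^ j * PP t (j + 2) S
      = PP t (j + 2) S + X ^ j * aa t 1 (j + 2) := by
  induction S with
  | zero =>
    simp [PP, Finset.Icc_eq_empty (show ¬ (1:ℕ) ≤ 0 by omega)]
  | succ S ih =>
    have hP3 : PP t (j+3) (S+1) = PP t (j+3) S + aa t (S+1) (j+3) :=
      Finset.sum_Icc_succ_top (by omega) _
    have hP2 : PP t (j+2) (S+1) = PP t (j+2) S + aa t (S+1) (j+2) :=
      Finset.sum_Icc_succ_top (by omega) _
    have hps := per_s t j (show S + 1 ≠ 0 by omega)
    rw [hP3, hP2]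
    linear_combination ih + hps

theorem coeff_AA_stab (t k n S : ℕ) (h : n ≤ S) :
    coeff n (AA t k) = coeff n (PP t k S) := by
  rw [AA, coeff_mk, PP, PP, map_sum, map_sum]
  apply Finset.sum_subset (Finset.Icc_subset_Icc_right h)
  intro s hs hns
  simp only [Finset.mem_Icc] at hs hns
  exact coeff_aa_zero (by omega)

theorem coeff_mul_congr {n : ℕ} {f g u : PowerSeries ℤ}
    (h : ∀ m ≤ n, coeff m f = coeff m g) :
    coeff n (u * f) = coeff n (u * g) := by
  rw [coeff_mul, coeff_mul]
  apply Finset.sum_congr rfl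
  rintro ⟨i, j⟩ hij
  rw [Finset.HasAntidiagonal.mem_antidiagonal] at hij
  rw [h j (by omega)]

/-- recursion for the full sums -/
theorem AA_rec (t j : ℕ) :
    (1 - X ^ (j + 2)) * AA t (j + 3)
      = (1 - X ^ j) * AA t (j + 2) + X ^ j * aa t 1 (j + 2) := by
  ext n
  have e1 : coeff n ((1 - X ^ (j + 2)) * AA t (j + 3))
      = coeff n ((1 - X ^ (j + 2)) * PP t (j + 3) n) :=
    coeff_mul_congr (fun m hm => coeff_AA_stab t (j+3) m n hm)
  have e2 : coeff n ((1 - X ^ j) * AA t (j + 2))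
      = coeff n ((1 - X ^ j) * PP t (j + 2) n) :=
    coeff_mul_congr (fun m hm => coeff_AA_stab t (j+2) m n hm)
  have key : (1 - X ^ (j + 2)) * PP t (j + 3) n
      = (1 - X ^ j) * PP t (j + 2) n + X ^ j * aa t 1 (j + 2)
        - X ^ j * aa t (n + 1) (j + 2) := by
    linear_combination partial_sum t j n
  rw [map_add, e1, e2, key]
  rw [map_sub, map_add]
  rw [coeff_X_pow_mul_aa_zero (show n < j + (2 * (n+1) + t) by omega)]
  ring

theorem QQ_mul_prodgg (m : ℕ) : QQ m * prodgg 1 m = 1 := by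
  rw [QQ, prodgg, show 1 + m = m + 1 by omega, Finset.Ico_add_one_right_eq_Icc,
    ← Finset.prod_mul_distrib]
  apply Finset.prod_eq_one
  intro i hi
  simp only [Finset.mem_Icc] at hi
  exact one_sub_X_pow_mul_gg (by omega)

theorem QQ_succ (m : ℕ) : QQ (m + 1) = QQ m * (1 - X ^ (m + 1)) :=
  Finset.prod_Icc_succ_top (by omega) _

theorem aa_one (t k : ℕ) : aa t 1 k = X ^ (t + 2) * prodgg 1 k := by
  rw [aa, show 2 * 1 + t = t + 2 by omega]

/-- main closed-form claim, by induction on the window length -/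
theorem claim (t : ℕ) : ∀ j : ℕ,
    (1 - X ^ (j + 2)) * ((1 - X ^ (j + 1)) * (QQ (j + 2) * AA t (j + 3)))
      = X ^ (t + 2) * rr j := by
  intro j
  induction j with
  | zero =>
    have h0 := AA_rec t 0
    simp only [pow_zero, sub_self, zero_mul, one_mul, zero_add] at h0
    -- h0 : (1 - X^2) * AA t 3 = aa t 1 2
    have hQ : QQ 2 * prodgg 1 2 = 1 := QQ_mul_prodgg 2
    calc (1 - X ^ (0 + 2)) * ((1 - X ^ (0 + 1)) * (QQ (0 + 2) * AA t (0 + 3)))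
        = (1 - X ^ 1) * (QQ 2 * ((1 - X ^ 2) * AA t 3)) := by ring_nf
      _ = (1 - X ^ 1) * (QQ 2 * (X ^ (t + 2) * prodgg 1 2)) := by rw [h0, aa_one]
      _ = (1 - X ^ 1) * (X ^ (t + 2) * (QQ 2 * prodgg 1 2)) := by ring
      _ = X ^ (t + 2) * rr 0 := by rw [hQ]; simp [rr]; ring
  | succ j ih =>
    have hrec := AA_rec t (j + 1)
    -- (1 - X^(j+3)) * AA t (j+4) = (1 - X^(j+1)) * AA t (j+3) + X^(j+1) * aa t 1 (j+3)
    have hQ : QQ (j + 3) * prodgg 1 (j + 3) = 1 := QQ_mul_prodgg (j + 3)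
    have hQs : QQ (j + 3) = QQ (j + 2) * (1 - X ^ (j + 3)) := QQ_succ (j + 2)
    have expand : (1 - X ^ (j + 1 + 2)) * ((1 - X ^ (j + 1 + 1)) * (QQ (j + 1 + 2) * AA t (j + 1 + 3)))
        = (1 - X ^ (j + 2)) * (QQ (j + 3) * ((1 - X ^ (j + 3)) * AA t (j + 4))) := by
      ring_nf
    rw [expand, hrec]
    have e1 : (1 - X ^ (j + 2)) * (QQ (j + 3) *
          ((1 - X ^ (j + 1)) * AA t (j + 3) + X ^ (j + 1) * aa t 1 (j + 3)))
        = (1 - X ^ (j + 3)) * ((1 - X ^ (j + 2)) * ((1 - X ^ (j + 1)) * (QQ (j + 2) * AA t (j + 3))))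
          + X ^ (j + 1) * (1 - X ^ (j + 2)) * (QQ (j + 3) * aa t 1 (j + 3)) := by
      rw [hQs]; ring
    rw [e1, ih, aa_one]
    have e2 : QQ (j + 3) * (X ^ (t + 2) * prodgg 1 (j + 3))
        = X ^ (t + 2) * (QQ (j + 3) * prodgg 1 (j + 3)) := by ring
    rw [show X ^ (j + 1) * (1 - X ^ (j + 2)) * (QQ (j + 3) * (X ^ (t + 2) * prodgg 1 (j + 3)))
        = X ^ (j + 1) * (1 - X ^ (j + 2)) * (X ^ (t + 2) * (QQ (j + 3) * prodgg 1 (j + 3))) by ring,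
      hQ]
    show _ = X ^ (t+2) * rr (j+1)
    rw [show rr (j+1) = (1 - X ^ (j + 3)) * rr j + X ^ (j + 1) * (1 - X ^ (j + 2)) from rfl]
    ring

/-- the polynomial identity -/
theorem pol : ∀ M : ℕ,
    X ^ (M + 4) * rr M
      = X ^ (M + 1) * (1 - X) * QQ (M + 2) - X ^ (M + 1) * (1 - X)
        + X ^ (M + 2) * (1 - X ^ (M + 2)) := by
  intro M
  induction M with
  | zero =>
    have hQ : QQ 2 = (1 - X) * (1 - X ^ 2) := by
      rw [show (2:ℕ) = 1 + 1 by rfl, QQ_succ, QQ, Finset.Icc_self, Finset.prod_singleton,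
        pow_one]
    rw [hQ, show rr 0 = 1 - X from rfl]
    ring
  | succ M ih =>
    rw [show rr (M+1) = (1 - X ^ (M + 3)) * rr M + X ^ (M + 1) * (1 - X ^ (M + 2)) from rfl,
      QQ_succ (M + 2)]
    linear_combination (X * (1 - X ^ (M + 3))) * ih

-- The main workhorse of the partition theorem proof.
theorem partialGF_prop (α : Type*) [CommSemiring α] (n : ℕ) (s : Finset ℕ) (hs : ∀ i ∈ s, 0 < i)
    (c : ℕ → Set ℕ) (hc : ∀ i, i ∉ s → 0 ∈ c i) :
    #{p : n.Partition | (∀ j, p.parts.count j ∈ c j) ∧ ∀ j ∈ p.parts, j ∈ s} =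
      coeff n (∏ i ∈ s, indicatorSeries α ((· * i) '' c i)) := by
  simp_rw [coeff_prod, coeff_indicator, prod_boole, sum_boole]
  apply congr_arg
  simp only [mem_univ, forall_true_left, not_and, not_forall, exists_prop,
    Set.mem_image, not_exists]
  set φ : (a : Nat.Partition n) →
    a ∈ filter (fun p ↦ (∀ (j : ℕ), Multiset.count j p.parts ∈ c j) ∧ ∀ j ∈ p.parts, j ∈ s) univ →
    ℕ →₀ ℕ := fun p _ => {
      toFun := fun i => Multiset.count i p.parts • i
      support := Finset.filter (fun i => i ≠ 0) p.parts.toFinset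
      mem_support_toFun := fun a => by
        simp only [smul_eq_mul, ne_eq, mul_eq_zero, Multiset.count_eq_zero]
        rw [not_or, not_not]
        simp only [Multiset.mem_toFinset, not_not, mem_filter] }
  refine Finset.card_bij φ ?_ ?_ ?_
  · intro a ha
    simp only [φ, not_forall, not_exists, not_and, exists_prop, mem_filter]
    rw [mem_finsuppAntidiag]
    dsimp only [ne_eq, smul_eq_mul, id_eq, eq_mpr_eq_cast, le_eq_subset, Finsupp.coe_mk]
    simp only [mem_univ, forall_true_left, not_and, not_forall, exists_prop,
      mem_filter, true_and] at ha
    refine ⟨⟨?_, fun i ↦ ?_⟩, fun i _ ↦ ⟨a.parts.count i, ha.1 i, rfl⟩⟩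
    · conv_rhs => simp [← a.parts_sum]
      rw [sum_multiset_count_of_subset _ s]
      · simp only [smul_eq_mul]
      · intro i
        simp only [Multiset.mem_toFinset, not_not, mem_filter]
        apply ha.2
    · simp only [ne_eq, Multiset.mem_toFinset, not_not, mem_filter, and_imp]
      exact fun hi _ ↦ ha.2 i hi
  · intro p₁ hp₁ p₂ hp₂ h
    apply Nat.Partition.ext
    simp only [true_and, mem_univ, mem_filter] at hp₁ hp₂
    ext i
    simp only [φ, ne_eq, Multiset.mem_toFinset, not_not, smul_eq_mul, Finsupp.mk.injEq] at h
    by_cases hi : i = 0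
    · rw [hi]
      rw [Multiset.count_eq_zero_of_notMem]
      · rw [Multiset.count_eq_zero_of_notMem]
        intro a; exact Nat.lt_irrefl 0 (hs 0 (hp₂.2 0 a))
      intro a; exact Nat.lt_irrefl 0 (hs 0 (hp₁.2 0 a))
    · rw [← mul_left_inj' hi]
      rw [funext_iff] at h
      exact h.2 i
  · simp only [φ, mem_filter, mem_finsuppAntidiag, mem_univ, exists_prop, true_and, and_assoc]
    rintro f ⟨hf, hf₃, hf₄⟩
    have hf' : f ∈ finsuppAntidiag s n := mem_finsuppAntidiag.mpr ⟨hf, hf₃⟩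
    simp only [mem_finsuppAntidiag] at hf'
    refine ⟨⟨∑ i ∈ s, Multiset.replicate (f i / i) i, ?_, ?_⟩, ?_, ?_, ?_⟩
    · intro i hi
      simp only [exists_prop, Multiset.mem_sum, mem_map, Function.Embedding.coeFn_mk] at hi
      rcases hi with ⟨t, ht, z⟩
      apply hs
      rwa [Multiset.eq_of_mem_replicate z]
    · simp_rw [Multiset.sum_sum, Multiset.sum_replicate, Nat.nsmul_eq_mul]
      rw [← hf'.1]
      refine sum_congr rfl fun i hi => Nat.div_mul_cancel ?_
      rcases hf₄ i hi with ⟨w, _, hw₂⟩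
      rw [← hw₂]
      exact dvd_mul_left _ _
    · intro i
      simp_rw [Multiset.count_sum', Multiset.count_replicate, sum_ite_eq']
      split_ifs with h
      · rcases hf₄ i h with ⟨w, hw₁, hw₂⟩
        rwa [← hw₂, Nat.mul_div_cancel _ (hs i h)]
      · exact hc _ h
    · intro i hi
      rw [Multiset.mem_sum] at hi
      rcases hi with ⟨j, hj₁, hj₂⟩
      rwa [Multiset.eq_of_mem_replicate hj₂]
    · ext i
      simp_rw [Multiset.count_sum', Multiset.count_replicate, sum_ite_eq']
      simp only [ne_eq, Multiset.mem_toFinset, not_not, smul_eq_mul, ite_mul,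
        zero_mul, Finsupp.coe_mk]
      split_ifs with h
      · apply Nat.div_mul_cancel
        rcases hf₄ i h with ⟨w, _, hw₂⟩
        apply Dvd.intro_left _ hw₂
      · apply symm
        rw [← Finsupp.notMem_support_iff]
        exact notMem_mono hf'.2 h



theorem indicator_univ (i : ℕ) :
    indicatorSeries ℤ ((· * i) '' Set.univ) = gg i := by
  rw [gg, show ((· * i) '' Set.univ) = {k | i ∣ k} from ?_]
  ext k
  simp only [Set.image_univ, Set.mem_range, Set.mem_setOf_eq]
  constructor
  · rintro ⟨p, rfl⟩; exact ⟨p, mul_comm p i⟩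
  · rintro ⟨p, rfl⟩; exact ⟨p, mul_comm p i⟩

theorem indicator_shift (i : ℕ) :
    indicatorSeries ℤ ((· * i) '' {m | 1 ≤ m}) = X ^ i * gg i := by
  ext n
  rw [coeff_indicator, coeff_X_pow_mul', gg, coeff_indicator]
  simp only [Set.mem_image, Set.mem_setOf_eq]
  by_cases h1 : i ≤ n
  · rw [if_pos h1]
    by_cases h2 : i ∣ n - i
    · rw [if_pos h2, if_pos]
      obtain ⟨d, hd⟩ := h2
      exact ⟨d + 1, by simp, by rw [add_mul, one_mul, mul_comm d i, ← hd, Nat.sub_add_cancel h1]⟩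
    · rw [if_neg h2, if_neg]
      rintro ⟨p, hp, rfl⟩
      exact h2 ⟨p - 1, by rw [Nat.mul_sub_one, mul_comm]⟩
  · rw [if_neg h1, if_neg]
    rintro ⟨p, hp, rfl⟩
    exact h1 (Nat.le_mul_of_pos_left i hp)

/-- the multiplicity constraints used for `a s (t+1)` -/
def cc (s t : ℕ) : ℕ → Set ℕ := fun i => if i = s ∨ i = s + t then {m | 1 ≤ m} else Set.univ

theorem prod_bridge (s t : ℕ) (ht : t ≠ 0) :
    (∏ i ∈ Finset.Icc s (s + t), indicatorSeries ℤ ((· * i) '' cc s t i))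
      = aa t s (t + 1) := by
  have hmem1 : s ∈ Finset.Icc s (s + t) := by rw [Finset.mem_Icc]; omega
  have hmem2 : s + t ∈ (Finset.Icc s (s + t)).erase s := by
    rw [Finset.mem_erase, Finset.mem_Icc]
    exact ⟨by omega, by omega⟩
  have split : ∀ F : ℕ → PowerSeries ℤ,
      (∏ i ∈ Finset.Icc s (s + t), F i)
        = F s * (F (s + t) * ∏ i ∈ ((Finset.Icc s (s + t)).erase s).erase (s + t), F i) := by
    intro F
    rw [Finset.mul_prod_erase _ F hmem2, Finset.mul_prod_erase _ F hmem1]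
  have hrest : (∏ i ∈ ((Finset.Icc s (s + t)).erase s).erase (s + t),
        indicatorSeries ℤ ((· * i) '' cc s t i))
      = ∏ i ∈ ((Finset.Icc s (s + t)).erase s).erase (s + t), gg i := by
    apply Finset.prod_congr rfl
    intro i hi
    rw [Finset.mem_erase, Finset.mem_erase] at hi
    rw [cc, if_neg (by tauto), indicator_univ]
  rw [split (fun i => indicatorSeries ℤ ((· * i) '' cc s t i)), aa, prodgg,
    show s + (t + 1) = (s + t) + 1 by omega, Finset.Ico_add_one_right_eq_Icc, split gg]
  rw [hrest, show cc s t s = {m | 1 ≤ m} by rw [cc, if_pos (Or.inl rfl)],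
    show cc s t (s + t) = {m | 1 ≤ m} by rw [cc, if_pos (Or.inr rfl)],
    indicator_shift, indicator_shift,
    show (2 * s + t) = s + (s + t) by omega, pow_add]
  ring

theorem coeff_aa_card (n s t : ℕ) (hs : 1 ≤ s) (ht : t ≠ 0) :
    (#{p : n.Partition | (∀ j, p.parts.count j ∈ cc s t j) ∧ ∀ j ∈ p.parts, j ∈ Finset.Icc s (s + t)} : ℤ)
      = coeff n (aa t s (t + 1)) := by
  rw [← prod_bridge s t ht]
  exact partialGF_prop ℤ n (Finset.Icc s (s + t)) (fun i hi => by
      simp only [Finset.mem_Icc] at hi; omega) (cc s t) (fun i hi => by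
      rw [cc, if_neg]
      · trivial
      · push_neg
        constructor <;> (rintro rfl; exact hi (by rw [Finset.mem_Icc]; omega)))


theorem cond_iff {t n : ℕ} (ht : 2 ≤ t) (s : ℕ) (p : n.Partition) :
    ((p.parts ≠ 0 ∧ (∀ a ∈ p.parts, ∀ b ∈ p.parts, a ≤ b + t) ∧
        ∃ a ∈ p.parts, ∃ b ∈ p.parts, a = b + t) ∧ sInf {a | a ∈ p.parts} = s)
      ↔ ((∀ j, p.parts.count j ∈ cc s t j) ∧ ∀ j ∈ p.parts, j ∈ Finset.Icc s (s + t)) := by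
  constructor
  · rintro ⟨⟨hne, hball, a, ha, b, hb, hab⟩, hf⟩
    obtain ⟨x, hx⟩ := Multiset.exists_mem_of_ne_zero hne
    have setne : {a | a ∈ p.parts}.Nonempty := ⟨x, hx⟩
    have hsmem : s ∈ p.parts := hf ▸ Nat.sInf_mem setne
    have hmin : ∀ j ∈ p.parts, s ≤ j := fun j hj => hf ▸ Nat.sInf_le hj
    have hub : ∀ j ∈ p.parts, j ≤ s + t := fun j hj => hball j hj s hsmem
    have hstmem : s + t ∈ p.parts := by
      have h1 : a ≤ s + t := hub a ha
      have h2 : s ≤ b := hmin b hb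
      have : a = s + t := by omega
      exact this ▸ ha
    constructor
    · intro j
      rw [cc]
      split_ifs with hj
      · rcases hj with rfl | rfl
        · exact Multiset.count_pos.mpr hsmem
        · exact Multiset.count_pos.mpr hstmem
      · trivial
    · intro j hj
      rw [Finset.mem_Icc]
      exact ⟨hmin j hj, hub j hj⟩
  · rintro ⟨hcount, hmem⟩
    have hs1 : s ∈ p.parts := by
      have := hcount s
      rw [cc, if_pos (Or.inl rfl)] at this
      exact Multiset.count_pos.mp this
    have hs2 : s + t ∈ p.parts := by
      have := hcount (s + t)
      rw [cc, if_pos (Or.inr rfl)] at this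
      exact Multiset.count_pos.mp this
    have hbd : ∀ j ∈ p.parts, s ≤ j ∧ j ≤ s + t := fun j hj => Finset.mem_Icc.mp (hmem j hj)
    refine ⟨⟨?_, ?_, s + t, hs2, s, hs1, rfl⟩, ?_⟩
    · intro h0
      rw [h0] at hs1
      exact absurd hs1 (Multiset.notMem_zero s)
    · intro a ha b hb
      have h1 := (hbd a ha).2
      have h2 := (hbd b hb).1
      omega
    · refine le_antisymm (Nat.sInf_le hs1) ?_
      exact (hbd _ (Nat.sInf_mem (⟨s, hs1⟩ : Set.Nonempty {a | a ∈ p.parts}))).1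

theorem main_count {t n : ℕ} (ht : 2 ≤ t) (hn : n ≠ 0) :
    (fixedDiffCount n t : ℤ) = coeff n (AA t (t + 1)) := by
  classical
  have hcard : fixedDiffCount n t
      = #(Finset.univ.filter (fun p : n.Partition => p.parts ≠ 0 ∧
          (∀ a ∈ p.parts, ∀ b ∈ p.parts, a ≤ b + t) ∧
          ∃ a ∈ p.parts, ∃ b ∈ p.parts, a = b + t)) := by
    rw [fixedDiffCount, Nat.card_eq_fintype_card]
    convert Fintype.card_subtype _ using 2
  have hfib := Finset.card_eq_sum_card_fiberwise
    (f := fun p : n.Partition => sInf {a | a ∈ p.parts})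
    (s := Finset.univ.filter (fun p : n.Partition => p.parts ≠ 0 ∧
          (∀ a ∈ p.parts, ∀ b ∈ p.parts, a ≤ b + t) ∧
          ∃ a ∈ p.parts, ∃ b ∈ p.parts, a = b + t))
    (t := Finset.Icc 1 n) ?_
  · rw [hcard, hfib]
    push_cast
    rw [show coeff n (AA t (t+1)) = coeff n (PP t (t+1) n) from coeff_AA_stab t (t+1) n n le_rfl,
      PP, map_sum]
    apply Finset.sum_congr rfl
    intro s hs
    rw [Finset.mem_Icc] at hs
    rw [← coeff_aa_card n s t hs.1 (by omega)]
    norm_cast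
    apply Finset.card_bij (fun p _ => p)
    · intro p hp
      simp only [Finset.mem_filter, Finset.mem_univ, true_and] at hp ⊢
      exact (cond_iff ht s p).mp (by simpa using hp)
    · intro p _ q _ h; exact h
    · intro p hp
      refine ⟨p, ?_, rfl⟩
      simp only [Finset.mem_filter, Finset.mem_univ, true_and] at hp ⊢
      simpa using (cond_iff ht s p).mpr hp
  · intro p hp
    rw [Finset.mem_coe, Finset.mem_filter] at hp
    obtain ⟨hne, hball, a, ha, b, hb, hab⟩ := hp.2
    obtain ⟨x, hx⟩ := Multiset.exists_mem_of_ne_zero hne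
    have setne : {a | a ∈ p.parts}.Nonempty := ⟨x, hx⟩
    have hsmem : sInf {a | a ∈ p.parts} ∈ p.parts := Nat.sInf_mem setne
    rw [Finset.mem_coe, Finset.mem_Icc]
    constructor
    · exact p.parts_pos hsmem
    · have := Multiset.single_le_sum (fun x _ => Nat.zero_le x) _ hsmem
      rwa [p.parts_sum] at this

end

end ABR

/-- The denominator-cleared Andrews–Beck–Robbins identity in `ℤ⟦X⟧`:
`(∑_{n≥1} p̃(n,t) Xⁿ)(1-X^{t-1})(1-X^t)∏_{i=1}^t (1-X^i)
  = X^{t-1}(1-X)∏_{i=1}^t (1-X^i) - X^{t-1}(1-X) + X^t(1-X^t)`. -/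
theorem andrews_beck_robbins (t : ℕ) (ht : 2 ≤ t) :
    (PowerSeries.mk fun n => if n = 0 then 0 else (fixedDiffCount n t : ℤ))
        * (1 - (PowerSeries.X : PowerSeries ℤ) ^ (t - 1))
        * (1 - (PowerSeries.X : PowerSeries ℤ) ^ t)
        * ∏ i ∈ Finset.Icc 1 t, (1 - (PowerSeries.X : PowerSeries ℤ) ^ i)
      = (PowerSeries.X : PowerSeries ℤ) ^ (t - 1) * (1 - PowerSeries.X)
            * ∏ i ∈ Finset.Icc 1 t, (1 - (PowerSeries.X : PowerSeries ℤ) ^ i)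
          - (PowerSeries.X : PowerSeries ℤ) ^ (t - 1) * (1 - PowerSeries.X)
          + (PowerSeries.X : PowerSeries ℤ) ^ t
            * (1 - (PowerSeries.X : PowerSeries ℤ) ^ t) := by
  obtain ⟨M, rfl⟩ : ∃ M, t = M + 2 := ⟨t - 2, by omega⟩
  have hF : (PowerSeries.mk fun n => if n = 0 then 0 else (fixedDiffCount n (M + 2) : ℤ))
      = ABR.AA (M + 2) (M + 3) := by
    ext n
    rw [PowerSeries.coeff_mk]
    rcases Nat.eq_zero_or_pos n with rfl | hn
    · rw [if_pos rfl, ABR.AA, PowerSeries.coeff_mk, ABR.PP,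
        Finset.Icc_eq_empty (by omega), Finset.sum_empty, map_zero]
    · rw [if_neg (by omega)]
      exact ABR.main_count (by omega) (by omega)
  have hclaim := ABR.claim (M + 2) M
  have hpol := ABR.pol M
  have hQ : ∏ i ∈ Finset.Icc 1 (M + 2), (1 - (PowerSeries.X : PowerSeries ℤ) ^ i)
      = ABR.QQ (M + 2) := rfl
  rw [hF, show M + 2 - 1 = M + 1 by omega, hQ]
  calc ABR.AA (M + 2) (M + 3) * (1 - (PowerSeries.X : PowerSeries ℤ) ^ (M + 1)) * (1 - (PowerSeries.X : PowerSeries ℤ) ^ (M + 2)) * ABR.QQ (M + 2)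
      = (1 - (PowerSeries.X : PowerSeries ℤ) ^ (M + 2)) * ((1 - (PowerSeries.X : PowerSeries ℤ) ^ (M + 1)) * (ABR.QQ (M + 2) * ABR.AA (M + 2) (M + 3))) := by
        ring
    _ = (PowerSeries.X : PowerSeries ℤ) ^ (M + 2 + 2) * ABR.rr M := hclaim
    _ = (PowerSeries.X : PowerSeries ℤ) ^ (M + 1) * (1 - PowerSeries.X) * ABR.QQ (M + 2) - (PowerSeries.X : PowerSeries ℤ) ^ (M + 1) * (1 - PowerSeries.X)
          + X ^ (M + 2) * (1 - (PowerSeries.X : PowerSeries ℤ) ^ (M + 2)) := by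
        rw [show M + 2 + 2 = M + 4 by omega]; exact hpol
end

section
/- Fix an integer t ≥ 1. In the ring of multivariate formal power series over ℤ in variables x_0, …, x_t, let S be the series whose coefficient at the monomial x^z = x_0^{z_0}⋯x_t^{z_t} (for z ∈ ℕ^{t+1}) is 1 if z ∈ ⋃_{m≥1} C_m and t divides z_t, and 0 otherwise. Then S · ∏_{j=0}^{t−1} (1 − x_0 x_1 ⋯ x_j) · (1 − x_t^t) = 1 − ∏_{j=0}^{t−1} (1 − x_0 x_1 ⋯ x_j). -/
namespace MGFaux

open Finset

/-- exponent of `x₀ x₁ ⋯ x_k`. -/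
noncomputable def bvec (t k : ℕ) : Fin (t + 1) →₀ ℕ :=
  ∑ i ∈ Finset.range (k + 1), Finsupp.single (Fin.ofNat (t + 1) i) 1

lemma bvec_apply (t k : ℕ) (hk : k ≤ t) (j : Fin (t + 1)) :
    bvec t k j = if (j : ℕ) ≤ k then 1 else 0 := by
  classical
  rw [bvec, Finset.sum_apply']
  have h1 : ∀ i ∈ Finset.range (k + 1), (Finsupp.single (Fin.ofNat (t + 1) i) 1) j
      = if i = (j : ℕ) then 1 else 0 := by
    intro i hi
    rw [Finset.mem_range] at hi
    rw [Finsupp.single_apply]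
    have : ((Fin.ofNat (t + 1) i) = j) ↔ i = (j : ℕ) := by
      rw [Fin.ext_iff, Fin.val_ofNat, Nat.mod_eq_of_lt (by omega)]
    simp only [this]
  rw [Finset.sum_congr rfl h1, Finset.sum_ite_eq' (Finset.range (k + 1)) ((j : ℕ))
    (fun _ => 1)]
  simp [Nat.lt_succ_iff]

lemma prodX_eq (t k : ℕ) :
    (∏ i ∈ Finset.range (k + 1), MvPowerSeries.X (Fin.ofNat (t + 1) i)
      : MvPowerSeries (Fin (t + 1)) ℤ)
      = MvPowerSeries.monomial (bvec t k) 1 := by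
  have h : ∀ n : ℕ, (∏ i ∈ Finset.range n, MvPowerSeries.X (Fin.ofNat (t + 1) i)
      : MvPowerSeries (Fin (t + 1)) ℤ)
      = MvPowerSeries.monomial (∑ i ∈ Finset.range n, Finsupp.single (Fin.ofNat (t + 1) i) 1) 1 := by
    intro n
    induction n with
    | zero => simp
    | succ n ih =>
        rw [Finset.prod_range_succ, ih, Finset.sum_range_succ,
          show (MvPowerSeries.X (Fin.ofNat (t + 1) n) : MvPowerSeries (Fin (t + 1)) ℤ)
            = MvPowerSeries.monomial (Finsupp.single (Fin.ofNat (t + 1) n) 1) 1 from rfl,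
          MvPowerSeries.monomial_mul_monomial, one_mul]
  exact h (k + 1)

/-- antitone on the first `t` coordinates -/
def Dec (t : ℕ) (z : Fin (t + 1) →₀ ℕ) : Prop :=
  ∀ i j : Fin (t + 1), (i : ℕ) ≤ (j : ℕ) → (j : ℕ) < t → z j ≤ z i

def Mlt (t : ℕ) (z : Fin (t + 1) →₀ ℕ) : Prop := t ∣ z (Fin.last t)

def cap (t k : ℕ) (z : Fin (t + 1) →₀ ℕ) : ℕ :=
  if h : k < t then z ⟨k, by omega⟩ else 0

def J (t k : ℕ) (z : Fin (t + 1) →₀ ℕ) : Prop :=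
  Dec t z ∧ (∀ i : Fin (t + 1), (i : ℕ) < k → z i ≤ cap t k z) ∧ Mlt t z

open scoped Classical in
noncomputable def sJ (t k : ℕ) : MvPowerSeries (Fin (t + 1)) ℤ :=
  fun z => if J t k z then 1 else 0

open scoped Classical in
lemma coeff_sJ (t k : ℕ) (z : Fin (t + 1) →₀ ℕ) :
    MvPowerSeries.coeff z (sJ t k) = if J t k z then 1 else 0 := by
  rw [MvPowerSeries.coeff_apply]; rfl


open scoped Classical in
lemma step_ind (t k : ℕ) (ht : 1 ≤ t) (hk : k < t) (z : Fin (t + 1) →₀ ℕ) :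
    (if J t k z then (1 : ℤ) else 0)
      - (if bvec t k ≤ z then (if J t k (z - bvec t k) then (1 : ℤ) else 0) else 0)
      = if J t (k + 1) z then 1 else 0 := by
  have hkt : k ≤ t := le_of_lt hk
  have hk1 : k < t + 1 := by omega
  have hk2 : k + 1 < t + 1 := by omega
  set b := bvec t k with hb
  have hble : b ≤ z ↔ ∀ j : Fin (t + 1), (j : ℕ) ≤ k → 1 ≤ z j := by
    rw [Finsupp.le_def]
    constructor
    · intro h j hj
      have h2 := h j
      rwa [hb, bvec_apply t k hkt, if_pos hj] at h2
    · intro h j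
      rw [hb, bvec_apply t k hkt]
      split
      · exact h j ‹_›
      · exact Nat.zero_le _
  have hsub : ∀ j : Fin (t + 1), (z - b) j = z j - (if (j : ℕ) ≤ k then 1 else 0) := by
    intro j
    rw [Finsupp.tsub_apply, hb, bvec_apply t k hkt]
  have hsubLe : ∀ j : Fin (t + 1), (j : ℕ) ≤ k → (z - b) j = z j - 1 := by
    intro j hj
    have h2 := hsub j
    rwa [if_pos hj] at h2
  have hsubGt : ∀ j : Fin (t + 1), k < (j : ℕ) → (z - b) j = z j := by
    intro j hj
    have h2 := hsub j
    rw [if_neg (Nat.not_le.mpr hj)] at h2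
    omega
  have hlastGt : k < ((Fin.last t : Fin (t + 1)) : ℕ) := by
    rw [Fin.val_last]; omega
  have hcapk : cap t k z = z ⟨k, hk1⟩ := dif_pos hk
  by_cases hJ1 : J t (k + 1) z
  · obtain ⟨hDec, hE, hM⟩ := hJ1
    have hJ0 : J t k z := by
      refine ⟨hDec, ?_, hM⟩
      intro i hi
      have h1 : z i ≤ cap t (k + 1) z := hE i (by omega)
      have h2 : cap t (k + 1) z ≤ z ⟨k, hk1⟩ := by
        by_cases h : k + 1 < t
        · rw [show cap t (k + 1) z = z ⟨k + 1, hk2⟩ from dif_pos h]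
          exact hDec ⟨k, hk1⟩ ⟨k + 1, hk2⟩ (Nat.le_succ k) h
        · rw [show cap t (k + 1) z = 0 from dif_neg h]
          exact Nat.zero_le _
      rw [hcapk]; omega
    have hnot : ¬ (b ≤ z ∧ J t k (z - b)) := by
      rintro ⟨hbz, hDw, hEw, hMw⟩
      have hzk1 : 1 ≤ z ⟨k, hk1⟩ := hble.mp hbz ⟨k, hk1⟩ (le_refl k)
      have hEk : z ⟨k, hk1⟩ ≤ cap t (k + 1) z := hE ⟨k, hk1⟩ (Nat.lt_succ_self k)
      by_cases h : k + 1 < t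
      · rw [show cap t (k + 1) z = z ⟨k + 1, hk2⟩ from dif_pos h] at hEk
        have hW := hDw ⟨k, hk1⟩ ⟨k + 1, hk2⟩ (Nat.le_succ k) h
        rw [hsubGt ⟨k + 1, hk2⟩ (Nat.lt_succ_self k), hsubLe ⟨k, hk1⟩ (le_refl k)] at hW
        omega
      · rw [show cap t (k + 1) z = 0 from dif_neg h] at hEk
        omega
    have h0 : (if b ≤ z then (if J t k (z - b) then (1 : ℤ) else 0) else 0) = 0 := by
      split
      · rw [if_neg (fun hJw => hnot ⟨‹_›, hJw⟩)]
      · rfl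
    rw [h0, if_pos hJ0, if_pos ⟨hDec, hE, hM⟩, sub_zero]
  · by_cases hJ0 : J t k z
    · obtain ⟨hDec, hE, hM⟩ := hJ0
      have hkk : ∀ i : Fin (t + 1), (i : ℕ) ≤ k → z i = z ⟨k, hk1⟩ := by
        intro i hi
        have h1 : z ⟨k, hk1⟩ ≤ z i := hDec i ⟨k, hk1⟩ hi hk
        rcases Nat.lt_or_ge (i : ℕ) k with h | h
        · have h2 : z i ≤ cap t k z := hE i h
          rw [hcapk] at h2; omega
        · have h3 : i = ⟨k, hk1⟩ := Fin.ext (show (i : ℕ) = k by omega)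
          rw [h3]
      have hcapk1 : cap t (k + 1) z < z ⟨k, hk1⟩ := by
        by_contra hcon
        push_neg at hcon
        apply hJ1
        refine ⟨hDec, ?_, hM⟩
        intro i hi
        calc z i = z ⟨k, hk1⟩ := hkk i (by omega)
          _ ≤ cap t (k + 1) z := hcon
      have hzk : 1 ≤ z ⟨k, hk1⟩ := by omega
      have hbz : b ≤ z := hble.mpr (fun j hj => by rw [hkk j hj]; exact hzk)
      have hJw : J t k (z - b) := by
        refine ⟨?_, ?_, ?_⟩
        · intro i j hij hjt
          rcases le_or_gt (j : ℕ) k with hj | hj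
          · rw [hsubLe j hj, hsubLe i (le_trans hij hj)]
            have h1 := hDec i j hij hjt
            omega
          · rw [hsubGt j hj]
            rcases le_or_gt (i : ℕ) k with hi | hi
            · rw [hsubLe i hi]
              have h1 : z j ≤ cap t (k + 1) z := by
                have h : k + 1 < t := by omega
                rw [show cap t (k + 1) z = z ⟨k + 1, hk2⟩ from dif_pos h]
                exact hDec ⟨k + 1, hk2⟩ j hj hjt
              have h2 := hkk i hi
              omega
            · rw [hsubGt i hi]
              exact hDec i j hij hjt
        · intro i hi
          rw [hsubLe i (by omega), show cap t k (z - b) = (z - b) ⟨k, hk1⟩ from dif_pos hk,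
            hsubLe ⟨k, hk1⟩ (le_refl k)]
          have h2 := hkk i (by omega)
          omega
        · show t ∣ (z - b) (Fin.last t)
          rw [hsubGt (Fin.last t) hlastGt]
          exact hM
      rw [if_pos ⟨hDec, hE, hM⟩, if_pos hbz, if_pos hJw, if_neg hJ1, sub_self]
    · have hnot : ¬ (b ≤ z ∧ J t k (z - b)) := by
        rintro ⟨hbz, hDw, hEw, hMw⟩
        apply hJ0
        refine ⟨?_, ?_, ?_⟩
        · intro i j hij hjt
          rcases le_or_gt (j : ℕ) k with hj | hj
          · have h1 := hDw i j hij hjt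
            rw [hsubLe j hj, hsubLe i (le_trans hij hj)] at h1
            have h2 := hble.mp hbz j hj
            have h3 := hble.mp hbz i (le_trans hij hj)
            omega
          · rcases le_or_gt (i : ℕ) k with hi | hi
            · have h1 := hDw i j hij hjt
              rw [hsubGt j hj, hsubLe i hi] at h1
              omega
            · have h1 := hDw i j hij hjt
              rw [hsubGt j hj, hsubGt i hi] at h1
              exact h1
        · intro i hi
          have h1 := hEw i hi
          rw [hsubLe i (by omega), show cap t k (z - b) = (z - b) ⟨k, hk1⟩ from dif_pos hk,
            hsubLe ⟨k, hk1⟩ (le_refl k)] at h1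
          have h2 := hble.mp hbz i (by omega)
          have h3 := hble.mp hbz ⟨k, hk1⟩ (le_refl k)
          rw [hcapk]
          omega
        · show t ∣ z (Fin.last t)
          have h1 : t ∣ (z - b) (Fin.last t) := hMw
          rwa [hsubGt (Fin.last t) hlastGt] at h1
      have h0 : (if b ≤ z then (if J t k (z - b) then (1 : ℤ) else 0) else 0) = 0 := by
        split
        · rw [if_neg (fun hJw => hnot ⟨‹_›, hJw⟩)]
        · rfl
      rw [h0, if_neg hJ0, if_neg hJ1, sub_zero]

open scoped Classical in
lemma final_step (t : ℕ) (ht : 1 ≤ t) :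
    sJ t t * (1 - MvPowerSeries.monomial (Finsupp.single (Fin.last t) t) 1) = 1 := by
  apply MvPowerSeries.ext
  intro z
  rw [mul_sub, mul_one, map_sub, MvPowerSeries.coeff_mul_monomial, coeff_sJ,
    MvPowerSeries.coeff_one]
  have hcap : cap t t (z - Finsupp.single (Fin.last t) t) = 0 := dif_neg (lt_irrefl t)
  have hcap' : cap t t z = 0 := dif_neg (lt_irrefl t)
  have hJiff : ∀ z' : Fin (t + 1) →₀ ℕ, cap t t z' = 0 →
      (J t t z' ↔ ((∀ i : Fin (t + 1), (i : ℕ) < t → z' i = 0) ∧ t ∣ z' (Fin.last t))) := by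
    intro z' hc
    constructor
    · rintro ⟨hD, hE, hM⟩
      refine ⟨fun i hi => ?_, hM⟩
      have := hE i hi
      omega
    · rintro ⟨h0, hM⟩
      refine ⟨fun i j hij hjt => ?_, fun i hi => ?_, hM⟩
      · rw [h0 j hjt]; exact Nat.zero_le _
      · rw [h0 i hi, hc]
  have hsub1 : ∀ i : Fin (t + 1), (i : ℕ) < t →
      (z - Finsupp.single (Fin.last t) t) i = z i := by
    intro i hi
    rw [Finsupp.tsub_apply, Finsupp.single_apply,
      if_neg (fun h => by rw [← h, Fin.val_last] at hi; omega)]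
    omega
  have hsub2 : (z - Finsupp.single (Fin.last t) t) (Fin.last t) = z (Fin.last t) - t := by
    rw [Finsupp.tsub_apply, Finsupp.single_apply, if_pos rfl]
  have hle : Finsupp.single (Fin.last t) t ≤ z ↔ t ≤ z (Fin.last t) :=
    Finsupp.single_le_iff
  by_cases hz : z = 0
  · subst hz
    rw [if_pos rfl, if_pos ((hJiff 0 hcap').mpr ⟨fun i _ => rfl, dvd_zero t⟩),
      if_neg (fun h => by rw [hle] at h; simp at h; omega), sub_zero]
  · rw [if_neg hz]
    by_cases hJ : J t t z
    · have h0 := ((hJiff z hcap').mp hJ).1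
      have hMz := ((hJiff z hcap').mp hJ).2
      have hzlast : z (Fin.last t) ≠ 0 := by
        intro hl
        apply hz
        ext i
        rcases Nat.lt_or_ge (i : ℕ) t with hi | hi
        · exact h0 i hi
        · have : i = Fin.last t := Fin.ext (by have := i.isLt; rw [Fin.val_last]; omega)
          rw [this]; exact hl
      have hge : t ≤ z (Fin.last t) := Nat.le_of_dvd (Nat.pos_of_ne_zero hzlast) hMz
      have hJw : J t t (z - Finsupp.single (Fin.last t) t) := by
        refine (hJiff _ hcap).mpr ⟨fun i hi => by rw [hsub1 i hi]; exact h0 i hi, ?_⟩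
        rw [hsub2]
        exact Nat.dvd_sub hMz dvd_rfl
      rw [if_pos hJ, if_pos (hle.mpr hge), coeff_sJ, if_pos hJw, mul_one, sub_self]
    · rw [if_neg hJ]
      have h0 : (if Finsupp.single (Fin.last t) t ≤ z
          then MvPowerSeries.coeff (z - Finsupp.single (Fin.last t) t) (sJ t t) * 1
          else 0) = 0 := by
        split
        · rw [coeff_sJ, mul_one, if_neg]
          intro hJw
          apply hJ
          obtain ⟨hw0, hwM⟩ := (hJiff _ hcap).mp hJw
          refine (hJiff z hcap').mpr ⟨fun i hi => by rw [← hsub1 i hi]; exact hw0 i hi, ?_⟩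
          rw [hsub2] at hwM
          have hget : t ≤ z (Fin.last t) := hle.mp ‹_›
          obtain ⟨c, hc⟩ := hwM
          exact ⟨c + 1, by rw [Nat.mul_add, Nat.mul_one]; omega⟩
        · rfl
      rw [h0, sub_zero]

open scoped Classical in
lemma step_series (t k : ℕ) (ht : 1 ≤ t) (hk : k < t) :
    sJ t k * (1 - MvPowerSeries.monomial (bvec t k) 1) = sJ t (k + 1) := by
  apply MvPowerSeries.ext
  intro z
  rw [mul_sub, mul_one, map_sub, MvPowerSeries.coeff_mul_monomial,
    coeff_sJ, coeff_sJ, coeff_sJ]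
  simp only [mul_one]
  exact step_ind t k ht hk z

open scoped Classical in
lemma prodJ (t : ℕ) (ht : 1 ≤ t) (k : ℕ) (hk : k ≤ t) :
    sJ t 0 * ∏ j ∈ Finset.range k, (1 - MvPowerSeries.monomial (bvec t j) 1)
      = sJ t k := by
  induction k with
  | zero => simp
  | succ n ih =>
      rw [Finset.prod_range_succ, ← mul_assoc, ih (by omega),
        step_series t n ht (by omega)]


lemma geneV_lt (t n : ℕ) (l : Fin (t + 1)) (hl : (l : ℕ) < t) :
    geneV t n l = if (l : ℕ) ≤ (n - 1) % t then 1 else 0 := by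
  simp only [geneV]
  rw [if_neg (by omega)]

lemma geneV_last (t n : ℕ) (l : Fin (t + 1)) (hl : (l : ℕ) = t) :
    geneV t n l = (((n - 1) / t) * t : ℕ) := by
  simp only [geneV]
  rw [if_pos hl]

lemma geom_fwd (t : ℕ) (ht : 1 ≤ t) (z : Fin (t + 1) →₀ ℕ) (m : ℕ)
    (hm : (fun j => (z j : ℝ)) ∈ coneC t m) : Dec t z ∧ 1 ≤ z 0 := by
  obtain ⟨α, hα0, hαnn, heq⟩ := hm
  have hcoord : ∀ l : Fin (t + 1),
      (z l : ℝ) = ∑ i : Fin (t + 1), α i * geneV t (m + (i : ℕ)) l := by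
    intro l
    have h2 := congrFun heq l
    rw [h2, Finset.sum_apply]
    exact Finset.sum_congr rfl fun i _ => rfl
  constructor
  · intro i j hij hjt
    have hij' : (z j : ℝ) ≤ (z i : ℝ) := by
      rw [hcoord i, hcoord j]
      apply Finset.sum_le_sum
      intro l _
      apply mul_le_mul_of_nonneg_left _ (hαnn l)
      rw [geneV_lt t _ j hjt, geneV_lt t _ i (by omega)]
      by_cases hcase : (j : ℕ) ≤ (m + (l : ℕ) - 1) % t
      · rw [if_pos hcase, if_pos (by omega)]
      · rw [if_neg hcase]
        split <;> norm_num
    exact_mod_cast hij'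
  · have h0 : (z 0 : ℝ) = ∑ i : Fin (t + 1), α i := by
      rw [hcoord 0]
      apply Finset.sum_congr rfl
      intro l _
      rw [geneV_lt t _ 0 (by rw [Fin.val_zero]; omega), if_pos (by rw [Fin.val_zero]; omega),
        mul_one]
    have hpos : (0 : ℝ) < ∑ i : Fin (t + 1), α i :=
      lt_of_lt_of_le hα0 (Finset.single_le_sum (fun i _ => hαnn i) (Finset.mem_univ 0))
    have : (0 : ℝ) < (z 0 : ℝ) := by rw [h0]; exact hpos
    exact Nat.cast_pos.mp this

open scoped Classical in
lemma geom_bwd (t : ℕ) (ht : 1 ≤ t) (z : Fin (t + 1) →₀ ℕ) (hDec : Dec t z)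
    (hz0 : 1 ≤ z 0) (hdvd : t ∣ z (Fin.last t)) :
    ∃ m : ℕ, 1 ≤ m ∧ (fun j => (z j : ℝ)) ∈ coneC t m := by
  obtain ⟨kk, hkk⟩ := hdvd
  set Z := z 0 with hZdef
  set ze : ℕ → ℕ := fun a => if h : a < t then z ⟨a, by omega⟩ else 0 with hzedef
  have hze_lt : ∀ (a : ℕ) (h : a < t), ze a = z ⟨a, by omega⟩ := fun a h => dif_pos h
  have hze_ge : ∀ a : ℕ, t ≤ a → ze a = 0 := fun a h => dif_neg (by omega)
  have hfin0 : (⟨0, by omega⟩ : Fin (t + 1)) = 0 := Fin.ext (by rw [Fin.val_zero])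
  have hze0 : ze 0 = Z := by rw [hze_lt 0 (by omega), hfin0]
  have hanti : ∀ a b : ℕ, a ≤ b → ze b ≤ ze a := by
    intro a b hab
    by_cases hb : b < t
    · rw [hze_lt a (by omega), hze_lt b hb]
      exact hDec ⟨a, by omega⟩ ⟨b, by omega⟩ hab hb
    · rw [hze_ge b (by omega)]
      exact Nat.zero_le _
  have hZpos : 0 < Z := hz0
  set q := kk / Z with hqdef
  set s := kk % Z with hsdef
  have hs : s < Z := Nat.mod_lt _ hZpos
  have hqs : Z * q + s = kk := Nat.div_add_mod kk Z
  set y := Z - s with hydef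
  have hy1 : 1 ≤ y := by omega
  have hyZ : y ≤ Z := by omega
  set r := Nat.findGreatest (fun a => y ≤ ze a) (t - 1) with hrdef
  have hrt : r < t := lt_of_le_of_lt (Nat.findGreatest_le _) (by omega)
  have hPr : y ≤ ze r := by
    have h6 : (fun a => y ≤ ze a) 0 := by
      show y ≤ ze 0
      rw [hze0]; exact hyZ
    have h7 := Nat.findGreatest_spec (P := fun a => y ≤ ze a) (m := 0) (n := t - 1)
      (Nat.zero_le _) h6
    rw [hrdef]
    exact h7
  have hr1 : ze (r + 1) < y := by
    by_cases h : r + 1 ≤ t - 1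
    · have h2 := Nat.findGreatest_is_greatest (P := fun a => y ≤ ze a) (n := t - 1)
        (k := r + 1) (by rw [← hrdef]; omega) h
      have h3 : ¬ y ≤ ze (r + 1) := h2
      omega
    · rw [hze_ge (r + 1) (by omega)]
      omega
  set c : ℕ → ℕ := fun ρ => ze ρ - ze (ρ + 1) with hcdef
  have tele : ∀ a b : ℕ, a ≤ b → ∑ ρ ∈ Finset.Ico a b, c ρ = ze a - ze b := by
    intro a b hab
    induction b with
    | zero =>
        have hb0 : a = 0 := by omega
        subst hb0; simp
    | succ n ih =>
        rcases Nat.lt_or_ge a (n + 1) with h | h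
        · rw [Finset.sum_Ico_succ_top (by omega), ih (by omega)]
          have h1 := hanti a n (by omega)
          have h2 := hanti n (n + 1) (by omega)
          have h3 : c n = ze n - ze (n + 1) := rfl
          omega
        · have hb1 : a = n + 1 := by omega
          subst hb1; simp
  set m := q * t + r + 1 with hmdef
  set A : ℕ → ℝ := fun n => if n = 0 then ((y - ze (r + 1) : ℕ) : ℝ)
    else if n = t then ((ze r - y : ℕ) : ℝ) else ((c ((r + n) % t) : ℕ) : ℝ) with hAdef
  have hA0 : A 0 = ((y - ze (r + 1) : ℕ) : ℝ) := if_pos rfl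
  have hAt' : A t = ((ze r - y : ℕ) : ℝ) := (if_neg (by omega : ¬ t = 0)).trans (if_pos rfl)
  have hAmid : ∀ n : ℕ, ¬ n = 0 → ¬ n = t → A n = ((c ((r + n) % t) : ℕ) : ℝ) :=
    fun n h1 h2 => (if_neg h1).trans (if_neg h2)
  -- the key indicator-weighted sum
  have key : ∀ L : ℕ, L < t →
      ∑ n ∈ Finset.range (t + 1), A n * (if L ≤ (r + n) % t then 1 else 0)
        = (ze L : ℝ) := by
    intro L hL
    set H : ℕ → ℝ := fun ρ => (c ρ : ℝ) * (if L ≤ ρ then 1 else 0) with hHdef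
    have hH : ∀ ρ : ℕ, H ρ = ((c ρ : ℕ) : ℝ) * (if L ≤ ρ then 1 else 0) := fun ρ => rfl
    have e0 : ∑ n ∈ Finset.range (t + 1), A n * (if L ≤ (r + n) % t then 1 else 0)
        = (A 0 * (if L ≤ r then 1 else 0) + ∑ n ∈ Finset.Ico 1 t, H ((r + n) % t))
          + A t * (if L ≤ r then 1 else 0) := by
      rw [Finset.sum_range_succ]
      congr 1
      · rw [Finset.range_eq_Ico, Finset.sum_eq_sum_Ico_succ_bot (by omega)]
        congr 1
        · rw [show (r + 0) % t = r by rw [Nat.add_zero, Nat.mod_eq_of_lt hrt]]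
        · apply Finset.sum_congr rfl
          intro n hn
          rw [Finset.mem_Ico] at hn
          rw [hH, hAmid n (by omega) (by omega)]
      · rw [show (r + t) % t = r by rw [Nat.add_mod_right, Nat.mod_eq_of_lt hrt]]
    have e1 : ∑ n ∈ Finset.Ico 1 t, H ((r + n) % t)
        = ∑ ρ ∈ Finset.Ico (r + 1) t, H ρ + ∑ ρ ∈ Finset.Ico 0 r, H ρ := by
      rw [← Finset.sum_Ico_consecutive (fun n => H ((r + n) % t))
        (show 1 ≤ t - r by omega) (show t - r ≤ t by omega)]
      congr 1
      · rw [Finset.sum_Ico_eq_sum_range, Finset.sum_Ico_eq_sum_range,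
          show t - r - 1 = t - (r + 1) by omega]
        apply Finset.sum_congr rfl
        intro i hi
        rw [Finset.mem_range] at hi
        rw [show r + (1 + i) = r + 1 + i by omega, Nat.mod_eq_of_lt (by omega)]
      · rw [Finset.sum_Ico_eq_sum_range, Finset.sum_Ico_eq_sum_range,
          show t - (t - r) = r - 0 by omega]
        apply Finset.sum_congr rfl
        intro i hi
        rw [Finset.mem_range] at hi
        rw [show r + (t - r + i) = i + t by omega, Nat.add_mod_right,
          Nat.mod_eq_of_lt (by omega), Nat.zero_add]
    have e2 : A 0 * (if L ≤ r then 1 else 0) + A t * (if L ≤ r then 1 else 0) = H r := by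
      rw [hA0, hAt', hH]
      have hcast : ((y - ze (r + 1) : ℕ) : ℝ) + ((ze r - y : ℕ) : ℝ) = ((c r : ℕ) : ℝ) := by
        rw [← Nat.cast_add]
        congr 1
        have hcr : c r = ze r - ze (r + 1) := rfl
        omega
      calc ((y - ze (r + 1) : ℕ) : ℝ) * (if L ≤ r then 1 else 0)
            + ((ze r - y : ℕ) : ℝ) * (if L ≤ r then 1 else 0)
          = (((y - ze (r + 1) : ℕ) : ℝ) + ((ze r - y : ℕ) : ℝ))
            * (if L ≤ r then 1 else 0) := by ring
        _ = ((c r : ℕ) : ℝ) * (if L ≤ r then 1 else 0) := by rw [hcast]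
    have e3 : ∑ ρ ∈ Finset.Ico 0 r, H ρ + H r + ∑ ρ ∈ Finset.Ico (r + 1) t, H ρ
        = ∑ ρ ∈ Finset.Ico 0 t, H ρ := by
      rw [show H r = ∑ ρ ∈ Finset.Ico r (r + 1), H ρ by simp,
        Finset.sum_Ico_consecutive H (show 0 ≤ r by omega) (show r ≤ r + 1 by omega),
        Finset.sum_Ico_consecutive H (show 0 ≤ r + 1 by omega) (show r + 1 ≤ t by omega)]
    have e4 : ∑ ρ ∈ Finset.Ico 0 t, H ρ = ∑ ρ ∈ Finset.Ico L t, ((c ρ : ℕ) : ℝ) := by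
      rw [← Finset.sum_Ico_consecutive H (show 0 ≤ L by omega) (le_of_lt hL),
        show ∑ ρ ∈ Finset.Ico 0 L, H ρ = 0 from Finset.sum_eq_zero (fun ρ hρ => by
          rw [Finset.mem_Ico] at hρ
          rw [hH, if_neg (by omega), mul_zero]), zero_add]
      apply Finset.sum_congr rfl
      intro ρ hρ
      rw [Finset.mem_Ico] at hρ
      rw [hH, if_pos (by omega), mul_one]
    have e5 : ∑ ρ ∈ Finset.Ico L t, ((c ρ : ℕ) : ℝ) = (ze L : ℝ) := by
      rw [← Nat.cast_sum, tele L t (le_of_lt hL)]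
      rw [hze_ge t (le_refl t), Nat.sub_zero]
    rw [e0, e1]
    rw [show A 0 * (if L ≤ r then 1 else 0) + (∑ ρ ∈ Finset.Ico (r + 1) t, H ρ
        + ∑ ρ ∈ Finset.Ico 0 r, H ρ) + A t * (if L ≤ r then 1 else 0)
      = ∑ ρ ∈ Finset.Ico 0 r, H ρ + (A 0 * (if L ≤ r then 1 else 0)
        + A t * (if L ≤ r then 1 else 0)) + ∑ ρ ∈ Finset.Ico (r + 1) t, H ρ by ring,
      e2, e3, e4, e5]
  -- sum of all As
  have hsumA : ∑ n ∈ Finset.range (t + 1), A n = (Z : ℝ) := by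
    have h2 := key 0 (by omega)
    rw [hze0] at h2
    rw [← h2]
    apply Finset.sum_congr rfl
    intro n _
    rw [if_pos (Nat.zero_le _), mul_one]
  -- the tail sums
  have htail : ∑ n ∈ Finset.Ico (t - r) (t + 1), A n = (s : ℝ) := by
    rw [Finset.sum_Ico_succ_top (show t - r ≤ t by omega)]
    have hmid : ∑ n ∈ Finset.Ico (t - r) t, A n = ∑ i ∈ Finset.range r, ((c i : ℕ) : ℝ) := by
      rw [Finset.sum_Ico_eq_sum_range, show t - (t - r) = r by omega]
      apply Finset.sum_congr rfl
      intro i hi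
      rw [Finset.mem_range] at hi
      rw [hAmid (t - r + i) (by omega) (by omega), show r + (t - r + i) = i + t by omega,
        Nat.add_mod_right, Nat.mod_eq_of_lt (by omega)]
    have h3 : ∑ i ∈ Finset.range r, ((c i : ℕ) : ℝ) = ((ze 0 - ze r : ℕ) : ℝ) := by
      rw [← Nat.cast_sum, Finset.range_eq_Ico, tele 0 r (Nat.zero_le r)]
    rw [hmid, hAt', h3, ← Nat.cast_add]
    have h4 := hanti 0 r (Nat.zero_le r)
    congr 1
    omega
  -- provide the cone representation
  refine ⟨m, by omega, fun i => A (i : ℕ), ?_, ?_, ?_⟩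
  · show (0 : ℝ) < A ((0 : Fin (t + 1)) : ℕ)
    rw [Fin.val_zero, hA0]
    exact_mod_cast (by omega : 0 < y - ze (r + 1))
  · intro i
    show (0 : ℝ) ≤ A (i : ℕ)
    by_cases h1 : (i : ℕ) = 0
    · rw [h1, hA0]; exact Nat.cast_nonneg _
    · by_cases h2 : (i : ℕ) = t
      · rw [h2, hAt']; exact Nat.cast_nonneg _
      · rw [hAmid _ h1 h2]; exact Nat.cast_nonneg _
  · apply funext
    intro l
    show (z l : ℝ) = _
    rw [Finset.sum_apply]
    have hr0 : ∑ i : Fin (t + 1), (A (i : ℕ) • geneV t (m + (i : ℕ))) l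
        = ∑ n ∈ Finset.range (t + 1), A n * geneV t (m + n) l :=
      Fin.sum_univ_eq_sum_range (fun n => A n * geneV t (m + n) l) (t + 1)
    rw [hr0]
    by_cases hl : (l : ℕ) < t
    · have hgl : ∀ n ∈ Finset.range (t + 1),
          A n * geneV t (m + n) l = A n * (if (l : ℕ) ≤ (r + n) % t then 1 else 0) := by
        intro n _
        rw [geneV_lt t (m + n) l hl,
          show m + n - 1 = (r + n) + q * t by omega, Nat.add_mul_mod_self_right]
      rw [Finset.sum_congr rfl hgl, key (l : ℕ) hl, hze_lt (l : ℕ) hl, Fin.eta]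
    · have hlt : (l : ℕ) = t := by have h5 := l.isLt; omega
      have hgl : ∀ n ∈ Finset.range (t + 1),
          A n * geneV t (m + n) l
            = ((q * t : ℕ) : ℝ) * A n + (t : ℝ) * (if t - r ≤ n then A n else 0) := by
        intro n hn
        rw [Finset.mem_range] at hn
        rw [geneV_last t (m + n) l hlt]
        have hdn : (m + n - 1) / t = q + (r + n) / t := by
          rw [show m + n - 1 = (r + n) + q * t by omega,
            Nat.add_mul_div_right _ _ (show 0 < t by omega)]
          omega
        have hdiv2 : (r + n) / t = if t - r ≤ n then 1 else 0 := by
          split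
          · exact Nat.div_eq_of_lt_le (by omega) (by omega)
          · exact Nat.div_eq_of_lt (by omega)
        rw [hdn, hdiv2]
        by_cases hcase : t - r ≤ n
        · rw [if_pos hcase, if_pos hcase]
          push_cast
          ring
        · rw [if_neg hcase, if_neg hcase]
          push_cast
          ring
      rw [Finset.sum_congr rfl hgl, Finset.sum_add_distrib, ← Finset.mul_sum,
        ← Finset.mul_sum, hsumA]
      have hsp : ∑ n ∈ Finset.range (t + 1), (if t - r ≤ n then A n else 0)
          = ∑ n ∈ Finset.Ico (t - r) (t + 1), A n := by
        rw [Finset.range_eq_Ico, ← Finset.sum_Ico_consecutive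
          (fun n => if t - r ≤ n then A n else 0)
          (show 0 ≤ t - r by omega) (show t - r ≤ t + 1 by omega),
          show ∑ n ∈ Finset.Ico 0 (t - r), (if t - r ≤ n then A n else 0) = 0 from
            Finset.sum_eq_zero (fun n hn => by
              rw [Finset.mem_Ico] at hn
              rw [if_neg (by omega)]), zero_add]
        apply Finset.sum_congr rfl
        intro n hn
        rw [Finset.mem_Ico] at hn
        rw [if_pos (by omega)]
      rw [hsp, htail]
      have hzl : z l = t * kk := by
        rw [show l = Fin.last t from Fin.ext (by rw [Fin.val_last, hlt])]
        exact hkk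
      rw [hzl]
      have hqs' : (Z : ℝ) * q + s = kk := by exact_mod_cast hqs
      push_cast
      linear_combination (-(t : ℝ)) * hqs'

open scoped Classical in
lemma geom (t : ℕ) (ht : 1 ≤ t) (z : Fin (t + 1) →₀ ℕ) :
    ((∃ m : ℕ, 1 ≤ m ∧ (fun j => (z j : ℝ)) ∈ coneC t m) ∧ t ∣ z (Fin.last t)) ↔
      (J t 0 z ∧ 1 ≤ z 0) := by
  constructor
  · rintro ⟨⟨m, hm, hmem⟩, hdvd⟩
    obtain ⟨hD, h0⟩ := geom_fwd t ht z m hmem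
    exact ⟨⟨hD, fun i hi => absurd hi (by omega), hdvd⟩, h0⟩
  · rintro ⟨⟨hD, _, hM⟩, h0⟩
    exact ⟨geom_bwd t ht z hD h0 hM, hM⟩

end MGFaux

open scoped Classical in
/-- Multivariate version: if `S ∈ ℤ⟦x₀,…,x_t⟧` is the indicator series of the lattice
points of `Λ = ℤ^t × tℤ` in `⋃_{m≥1} C_m`, then
`S · ∏_{j=0}^{t-1} (1 - x₀x₁⋯x_j) · (1 - x_t^t) = 1 - ∏_{j=0}^{t-1} (1 - x₀x₁⋯x_j)`. -/
theorem multivariate_generating_function_identity (t : ℕ) (ht : 1 ≤ t)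
    (S : MvPowerSeries (Fin (t + 1)) ℤ)
    (hS : ∀ z : Fin (t + 1) →₀ ℕ,
      MvPowerSeries.coeff (R := ℤ) z S =
        if (∃ m : ℕ, 1 ≤ m ∧ (fun j => (z j : ℝ)) ∈ coneC t m) ∧ t ∣ z (Fin.last t)
        then 1 else 0) :
    S * (∏ j ∈ Finset.range t,
          (1 - ∏ i ∈ Finset.range (j + 1), MvPowerSeries.X (Fin.ofNat (t + 1) i)))
        * (1 - MvPowerSeries.X (Fin.last t) ^ t)
      = 1 - ∏ j ∈ Finset.range t,
          (1 - ∏ i ∈ Finset.range (j + 1), MvPowerSeries.X (Fin.ofNat (t + 1) i)) := by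
  classical
  have hP : (∏ j ∈ Finset.range t,
        (1 - ∏ i ∈ Finset.range (j + 1), MvPowerSeries.X (Fin.ofNat (t + 1) i))
        : MvPowerSeries (Fin (t + 1)) ℤ)
      = ∏ j ∈ Finset.range t, (1 - MvPowerSeries.monomial (MGFaux.bvec t j) 1) := by
    refine Finset.prod_congr rfl fun j hj => ?_
    rw [MGFaux.prodX_eq]
  have hXt : (MvPowerSeries.X (Fin.last t) ^ t : MvPowerSeries (Fin (t + 1)) ℤ)
      = MvPowerSeries.monomial (Finsupp.single (Fin.last t) t) 1 :=
    MvPowerSeries.X_pow_eq (Fin.last t) t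
  -- S = sJ 0 - sJ t
  have hSd : S = MGFaux.sJ t 0 - MGFaux.sJ t t := by
    apply MvPowerSeries.ext
    intro z
    rw [hS z, map_sub, MGFaux.coeff_sJ, MGFaux.coeff_sJ]
    rw [if_congr (MGFaux.geom t ht z) rfl rfl]
    by_cases h0 : MGFaux.J t 0 z
    · by_cases h1 : 1 ≤ z 0
      · rw [if_pos ⟨h0, h1⟩, if_pos h0, if_neg, sub_zero]
        intro hJt
        have := hJt.2.1 0 (by simp; omega)
        rw [MGFaux.cap, dif_neg (lt_irrefl t)] at this
        omega
      · rw [if_neg (by tauto), if_pos h0, if_pos, sub_self]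
        refine ⟨h0.1, ?_, h0.2.2⟩
        intro i hi
        rw [MGFaux.cap, dif_neg (lt_irrefl t)]
        have := h0.1 0 i (by simp) hi
        omega
    · rw [if_neg (by tauto), if_neg h0, if_neg, sub_self]
      intro hJt
      exact h0 ⟨hJt.1, fun i hi => absurd hi (by omega), hJt.2.2⟩
  have h1 : MGFaux.sJ t 0 * ∏ j ∈ Finset.range t,
      (1 - MvPowerSeries.monomial (MGFaux.bvec t j) 1) = MGFaux.sJ t t :=
    MGFaux.prodJ t ht t le_rfl
  have h2 := MGFaux.final_step t ht
  rw [hP, hXt, hSd, sub_mul, sub_mul, h1]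
  rw [show MGFaux.sJ t t * (∏ j ∈ Finset.range t,
      (1 - MvPowerSeries.monomial (MGFaux.bvec t j) 1))
      * (1 - MvPowerSeries.monomial (Finsupp.single (Fin.last t) t) 1)
    = MGFaux.sJ t t * (1 - MvPowerSeries.monomial (Finsupp.single (Fin.last t) t) 1)
      * (∏ j ∈ Finset.range t, (1 - MvPowerSeries.monomial (MGFaux.bvec t j) 1)) by ring]
  rw [h2, one_mul]
end
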